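/- arXiv:1204.0403 — 7 statements merged into one kernel-verified Lean document; each statement's English description precedes it below -/
import Mathlib

section
/- Let P ⊆ ℝ be a nonempty open set with Lebesgue measure λ(P) > 1. Then there exist x, y ∈ P with dist(x,y) a positive integer. -/
open MeasureTheory Set

theorem measure_gt_one_integral_distance
    (P : Set ℝ) (hP : IsOpen P) (hne : P.Nonempty) (hvol : 1 < volume P) :
    ∃ x ∈ P, ∃ y ∈ P, ∃ n : ℕ, 0 < n ∧ dist x y = n := by
  by_contra hcon
  push_neg at hcon
  -- pieces
  set S : ℤ → Set ℝ := fun n => P ∩ Ico (n : ℝ) (n + 1) with hS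
  set A : ℤ → Set ℝ := fun n => (fun x => x + (-(n : ℝ))) '' S n with hA
  have hSm : ∀ n, MeasurableSet (S n) := fun n =>
    (hP.measurableSet).inter measurableSet_Ico
  have hAm : ∀ n, MeasurableSet (A n) := fun n =>
    (measurableEmbedding_addRight (-(n : ℝ))).measurableSet_image.2 (hSm n)
  have hAvol : ∀ n, volume (A n) = volume (S n) := by
    intro n
    simpa [hA, image_add_right] using
      measure_preimage_add_right (volume : Measure ℝ) ((n : ℝ)) (S n)
  have hAsub : ∀ n, A n ⊆ Ico (0 : ℝ) 1 := by
    rintro n _ ⟨x, ⟨_, hx1, hx2⟩, rfl⟩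
    constructor <;> simp only [mem_Ico] <;> linarith
  have hdisj : Pairwise (Function.onFun Disjoint A) := by
    intro n m hnm
    rw [Function.onFun, disjoint_left]
    rintro a ⟨x, ⟨hxP, _⟩, hx⟩ ⟨y, ⟨hyP, _⟩, hy⟩
    simp only at hx hy
    have hxy : x - y = (n : ℝ) - m := by
      have := hx.trans hy.symm
      linarith
    have hne' : ((n - m : ℤ) : ℝ) ≠ 0 := by
      simp only [Int.cast_ne_zero, sub_ne_zero]
      exact hnm
    have hkey := hcon x hxP y hyP (n - m).natAbs
    have hpos : 0 < (n - m).natAbs := Int.natAbs_pos.2 (sub_ne_zero.2 hnm)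
    apply hkey hpos
    have : dist x y = |((n - m : ℤ) : ℝ)| := by
      rw [Real.dist_eq, hxy]
      push_cast
      ring_nf
    rw [this]
    simp [Nat.cast_natAbs]
  -- measure computation
  have hPU : P = ⋃ n : ℤ, S n := by
    rw [hS, ← inter_iUnion, iUnion_Ico_intCast, inter_univ]
  have h1 : volume P = ∑' n : ℤ, volume (S n) := by
    rw [hPU]
    exact measure_iUnion
      (fun n m hnm => ((pairwise_disjoint_Ico_intCast (α := ℝ)) hnm).mono
        inter_subset_right inter_subset_right) hSm
  have h2 : ∑' n : ℤ, volume (A n) = volume (⋃ n, A n) :=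
    (measure_iUnion hdisj hAm).symm
  have h3 : volume (⋃ n, A n) ≤ volume (Ico (0 : ℝ) 1) :=
    measure_mono (iUnion_subset hAsub)
  have h4 : volume (Ico (0 : ℝ) 1) = 1 := by simp
  have : volume P ≤ 1 := by
    calc volume P = ∑' n : ℤ, volume (A n) := by simp_rw [h1, hAvol]
    _ ≤ 1 := by rw [h2, ← h4]; exact h3
  exact absurd hvol (not_lt.2 this)
end

section
/- Let P ⊆ ℝ be an open set with Lebesgue measure λ(P) ≤ 1. Then there exists a real number a such that the translate P + a is disjoint from ℤ. -/
open MeasureTheory Set ENNReal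

theorem measure_le_one_exists_shift_avoiding_integers
    (P : Set ℝ) (hP : IsOpen P) (hvol : volume P ≤ 1) :
    ∃ a : ℝ, ∀ x ∈ P, ¬ ∃ m : ℤ, x + a = m := by
  by_contra hcon
  push_neg at hcon
  -- the sets A m = {t ∈ (0,1) | m - t ∈ P} are open and cover (0,1)
  set A : ℤ → Set ℝ := fun m => (fun t => (m : ℝ) - t) ⁻¹' P ∩ Ioo 0 1 with hA
  have hAopen : ∀ m, IsOpen (A m) := by
    intro m
    exact (hP.preimage (by continuity)).inter isOpen_Ioo
  have hAmeasble : ∀ m, MeasurableSet (A m) := fun m => (hAopen m).measurableSet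
  have hmp : ∀ m : ℝ, MeasurePreserving (fun t : ℝ => m - t) volume volume := by
    intro m
    have : (fun t : ℝ => m - t) = Neg.neg ∘ (fun t : ℝ => -m + t) := by ext t; simp; ring
    rw [this]
    exact (Measure.measurePreserving_neg volume).comp (measurePreserving_add_left volume (-m))
  have hAvol : ∀ m : ℤ, volume (A m) = volume (P ∩ Ioo ((m : ℝ) - 1) m) := by
    intro m
    have hset : A m = (fun t : ℝ => (m : ℝ) - t) ⁻¹' (P ∩ Ioo ((m : ℝ) - 1) m) := by
      ext t
      simp only [hA, Set.mem_inter_iff, Set.mem_preimage, Set.mem_Ioo]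
      constructor
      · rintro ⟨h1, h2, h3⟩; exact ⟨h1, by linarith, by linarith⟩
      · rintro ⟨h1, h2, h3⟩; exact ⟨h1, by linarith, by linarith⟩
    rw [hset, (hmp (m : ℝ)).measure_preimage
      ((hP.measurableSet.inter measurableSet_Ioo).nullMeasurableSet)]
  -- covering of (0,1)
  have hcov : ∀ t ∈ Ioo (0 : ℝ) 1, ∃ m : ℤ, t ∈ A m := by
    intro t ht
    obtain ⟨x, hx, m, hxm⟩ := hcon t
    refine ⟨m, ?_, ht⟩
    simp only [Set.mem_preimage]
    have : (m : ℝ) - t = x := by linarith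
    rwa [this]
  -- total measure bound
  have hsum : ∑' m : ℤ, volume (A m) ≤ 1 := by
    have hdisj : Pairwise (Function.onFun Disjoint fun m : ℤ => P ∩ Ioo ((m : ℝ) - 1) m) := by
      intro m k hmk
      simp only [Function.onFun]
      rw [Set.disjoint_left]
      rintro t ⟨-, h2, h3⟩ ⟨-, h5, h6⟩
      apply hmk
      have h7 : (k : ℝ) - 1 < m := by linarith
      have h8 : (m : ℝ) - 1 < k := by linarith
      have h7' : k ≤ m := by
        have hlt : (k : ℝ) < (m : ℝ) + 1 := by linarith
        exact Int.lt_add_one_iff.mp (by exact_mod_cast hlt)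
      have h8' : m ≤ k := by
        have hlt : (m : ℝ) < (k : ℝ) + 1 := by linarith
        exact Int.lt_add_one_iff.mp (by exact_mod_cast hlt)
      omega
    calc ∑' m : ℤ, volume (A m) = ∑' m : ℤ, volume (P ∩ Ioo ((m : ℝ) - 1) m) := by
          exact tsum_congr hAvol
      _ = volume (⋃ m : ℤ, P ∩ Ioo ((m : ℝ) - 1) m) := by
          exact (measure_iUnion hdisj fun m =>
            hP.measurableSet.inter measurableSet_Ioo).symm
      _ ≤ volume P := measure_mono (Set.iUnion_subset fun m => Set.inter_subset_left)
      _ ≤ 1 := hvol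
  -- the A m are pairwise disjoint
  have hApair : Pairwise (Function.onFun Disjoint A) := by
    intro m k hmk
    rw [Function.onFun]
    by_contra hnd
    rw [Set.not_disjoint_iff_nonempty_inter] at hnd
    have hpos : 0 < volume (A m ∩ A k) :=
      ((hAopen m).inter (hAopen k)).measure_pos volume hnd
    set B : Set ℝ := ⋃ i : ℤ, if i = m then ∅ else A i with hB
    have hBmeas : MeasurableSet B := by
      apply MeasurableSet.iUnion
      intro i
      split <;> simp [hAmeasble i]
    have hBle : volume B ≤ ∑' i : ℤ, if i = m then 0 else volume (A i) := by
      refine le_trans (measure_iUnion_le _) ?_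
      refine ENNReal.tsum_le_tsum fun i => ?_
      split <;> simp
    have hcover : Ioo (0 : ℝ) 1 ⊆ A m ∪ B := by
      intro t ht
      obtain ⟨i, hi⟩ := hcov t ht
      by_cases h : i = m
      · exact Or.inl (h ▸ hi)
      · refine Or.inr (Set.mem_iUnion.mpr ⟨i, ?_⟩)
        simp [h, hi]
    have hinter : A m ∩ A k ⊆ A m ∩ B := by
      refine Set.inter_subset_inter_right _ ?_
      intro t ht
      refine Set.mem_iUnion.mpr ⟨k, ?_⟩
      simp [hmk.symm, ht]
    have key : (1 : ℝ≥0∞) + volume (A m ∩ A k) ≤ 1 := by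
      calc (1 : ℝ≥0∞) + volume (A m ∩ A k)
          = volume (Ioo (0 : ℝ) 1) + volume (A m ∩ A k) := by
            rw [Real.volume_Ioo]; norm_num
        _ ≤ volume (A m ∪ B) + volume (A m ∩ B) :=
            add_le_add (measure_mono hcover) (measure_mono hinter)
        _ = volume (A m) + volume B := measure_union_add_inter _ hBmeas
        _ ≤ volume (A m) + ∑' i : ℤ, if i = m then 0 else volume (A i) :=
            add_le_add le_rfl hBle
        _ = ∑' i : ℤ, volume (A i) := by
            rw [ENNReal.tsum_eq_add_tsum_ite (f := fun i => volume (A i)) m]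
            congr 1
            exact tsum_congr fun i => by by_cases h : i = m <;> simp [h]
        _ ≤ 1 := hsum
    exact absurd key (not_le.mpr (ENNReal.lt_add_right one_ne_top hpos.ne'))
  -- by connectedness, one A m₀ contains all of (0,1)
  obtain ⟨m₀, hm₀⟩ := hcov (1/2) (by norm_num)
  set C : Set ℝ := ⋃ i : ℤ, if i = m₀ then ∅ else A i with hC
  have hCopen : IsOpen C := by
    apply isOpen_iUnion
    intro i
    split
    · exact isOpen_empty
    · exact hAopen i
  have hACdisj : Disjoint (A m₀) C := by
    rw [Set.disjoint_iff_inter_eq_empty, Set.inter_iUnion, Set.iUnion_eq_empty]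
    intro i
    by_cases h : i = m₀
    · simp [h]
    · simp only [if_neg h]
      exact Set.disjoint_iff_inter_eq_empty.mp (hApair (Ne.symm h))
  have hsub : Ioo (0 : ℝ) 1 ⊆ A m₀ := by
    refine IsPreconnected.subset_left_of_subset_union (hAopen m₀) hCopen hACdisj ?_ ?_
      isPreconnected_Ioo
    · intro t ht
      obtain ⟨i, hi⟩ := hcov t ht
      by_cases h : i = m₀
      · exact Or.inl (h ▸ hi)
      · refine Or.inr (Set.mem_iUnion.mpr ⟨i, ?_⟩); simp [h, hi]
    · exact ⟨1/2, by norm_num, hm₀⟩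
  have hIooP : Ioo ((m₀ : ℝ) - 1) m₀ ⊆ P := by
    intro y hy
    have ht : (m₀ : ℝ) - y ∈ Ioo (0 : ℝ) 1 := ⟨by simp at hy ⊢; linarith [hy.2],
      by simp at hy ⊢; linarith [hy.1]⟩
    have := hsub ht
    simp only [hA, Set.mem_inter_iff, Set.mem_preimage] at this
    have h2 : (m₀ : ℝ) - ((m₀ : ℝ) - y) = y := by ring
    rw [h2] at this
    exact this.1
  -- there is an integer inside P, with a ball around it
  obtain ⟨x, hxP, m, hxm⟩ := hcon 0
  rw [add_zero] at hxm
  subst hxm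
  obtain ⟨δ, hδpos, hball⟩ := Metric.isOpen_iff.mp hP _ hxP
  set ε : ℝ := min δ 1 with hε
  have hεpos : 0 < ε := lt_min hδpos one_pos
  have hε1 : ε ≤ 1 := min_le_right _ _
  have hεδ : ε ≤ δ := min_le_left _ _
  -- choose an interval J ⊆ P of length ε disjoint from Ioo (m₀-1) m₀
  obtain ⟨J, hJP, hJdisj, hJvol⟩ :
      ∃ J : Set ℝ, J ⊆ P ∧ Disjoint (Ioo ((m₀ : ℝ) - 1) m₀) J ∧ volume J = ENNReal.ofReal ε := by
    rcases le_or_gt m (m₀ - 1) with hmm | hmm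
    · refine ⟨Ioo ((m : ℝ) - ε) m, ?_, ?_, ?_⟩
      · intro t ht
        apply hball
        rw [Real.ball_eq_Ioo]
        simp only [Set.mem_Ioo] at ht ⊢
        constructor <;> [linarith; linarith]
      · rw [Set.disjoint_left]
        rintro t ⟨h1, h2⟩ ⟨h3, h4⟩
        have hc : (m : ℝ) ≤ ((m₀ - 1 : ℤ) : ℝ) := by exact_mod_cast hmm
        push_cast at hc
        linarith
      · rw [Real.volume_Ioo]; congr 1; ring
    · have hmm' : m₀ ≤ m := by omega
      refine ⟨Ioo (m : ℝ) ((m : ℝ) + ε), ?_, ?_, ?_⟩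
      · intro t ht
        apply hball
        rw [Real.ball_eq_Ioo]
        simp only [Set.mem_Ioo] at ht ⊢
        constructor <;> [linarith; linarith]
      · rw [Set.disjoint_left]
        rintro t ⟨h1, h2⟩ ⟨h3, h4⟩
        have : (m₀ : ℝ) ≤ (m : ℝ) := by exact_mod_cast hmm'
        linarith
      · rw [Real.volume_Ioo]; congr 1; ring
  have hdisjJ : Disjoint (Ioo ((m₀ : ℝ) - 1) (m₀ : ℝ)) J := hJdisj
  have hunion : volume (Ioo ((m₀ : ℝ) - 1) (m₀ : ℝ) ∪ J) ≤ 1 :=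
    le_trans (measure_mono (Set.union_subset hIooP hJP)) hvol
  have hge : volume (Ioo ((m₀ : ℝ) - 1) (m₀ : ℝ) ∪ J) = 1 + ENNReal.ofReal ε := by
    rw [measure_union' hdisjJ measurableSet_Ioo, Real.volume_Ioo, hJvol]
    congr 1
    norm_num
  rw [hge] at hunion
  have : (1 : ℝ≥0∞) < 1 + ENNReal.ofReal ε :=
    ENNReal.lt_add_right one_ne_top (by simp [hεpos])
  exact absurd hunion (not_le.mpr this)
end

section
/- Let C₁, C₂ be distinct connected components of an open set P ⊆ ℝ^d containing no pair of points at positive integer distance. If the d-dimensional Lebesgue measure λ_d(C₁ ∪ C₂) exceeds the volume of the d-dimensional ball of diameter 1, then dist(C₁, C₂) ≥ 1. -/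
open Metric MeasureTheory Set
open scoped ENNReal NNReal Pointwise

/-- Distance between two subsets of a metric space. -/
noncomputable def setDist {E : Type*} [PseudoMetricSpace E] (A B : Set E) : ℝ :=
  sInf {r | ∃ x ∈ A, ∃ y ∈ B, r = dist x y}

/-- The set of midpoints between two sets in a real vector space. -/
def midSet {E : Type*} [AddCommGroup E] [Module ℝ E] (A B : Set E) : Set E :=
  (fun p : E × E => (2⁻¹ : ℝ) • (p.1 + p.2)) '' (A ×ˢ B)

lemma mem_midSet {E : Type*} [AddCommGroup E] [Module ℝ E] {A B : Set E} {z : E} :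
    z ∈ midSet A B ↔ ∃ u ∈ A, ∃ v ∈ B, z = (2⁻¹ : ℝ) • (u + v) := by
  constructor
  · rintro ⟨⟨u, v⟩, ⟨hu, hv⟩, rfl⟩; exact ⟨u, hu, v, hv, rfl⟩
  · rintro ⟨u, hu, v, hv, rfl⟩; exact ⟨(u, v), ⟨hu, hv⟩, rfl⟩


lemma ennreal_four_mul_le_sq (X Y : ℝ≥0∞) : 4 * (X * Y) ≤ (X + Y) ^ 2 := by
  rcases le_total X Y with hxy | hxy
  · obtain ⟨c, rfl⟩ := exists_add_of_le hxy
    have h : (X + (X + c)) ^ 2 = 4 * (X * (X + c)) + c ^ 2 := by ring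
    rw [h]; exact self_le_add_right _ _
  · obtain ⟨c, rfl⟩ := exists_add_of_le hxy
    have h : ((Y + c) + Y) ^ 2 = 4 * ((Y + c) * Y) + c ^ 2 := by ring
    rw [h]; exact self_le_add_right _ _

lemma sq_helper (X Y D : ℝ≥0∞) (h : X + Y ≤ 2 * D) : X * Y ≤ D ^ 2 := by
  have h4 : 4 * (X * Y) ≤ 4 * D ^ 2 := by
    calc 4 * (X * Y) ≤ (X + Y) ^ 2 := ennreal_four_mul_le_sq X Y
    _ ≤ (2 * D) ^ 2 := by rw [pow_two, pow_two]; exact mul_le_mul' h h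
    _ = 4 * D ^ 2 := by ring
  exact (ENNReal.mul_le_mul_iff_right (by norm_num) (by norm_num)).mp h4

/-- One-dimensional sumset inequality. -/
lemma sumset_one_dim {A B : Set ℝ} (hA : MeasurableSet A) (hB : MeasurableSet B)
    (hAne : A.Nonempty) (hBne : B.Nonempty) (hAf : volume A ≠ ⊤) (hBf : volume B ≠ ⊤) :
    volume A + volume B ≤ volume (A + B) := by
  rcases eq_top_or_lt_top (volume (A + B)) with htop | htop
  · rw [htop]; exact le_top
  refine ENNReal.le_of_forall_pos_le_add fun ε hε _ => ?_
  have hε2 : ((ε : ℝ≥0∞) / 2) ≠ 0 := by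
    intro hcon
    rcases ENNReal.div_eq_zero_iff.mp hcon with h | h
    · exact (ENNReal.coe_ne_zero.mpr hε.ne') h
    · exact ENNReal.ofNat_ne_top h
  obtain ⟨K, hKA, hKc, hKv⟩ := hA.exists_isCompact_lt_add hAf hε2
  obtain ⟨L, hLB, hLc, hLv⟩ := hB.exists_isCompact_lt_add hBf hε2
  obtain ⟨a0, ha0⟩ := hAne
  obtain ⟨b0, hb0⟩ := hBne
  set K' : Set ℝ := K ∪ {a0} with hK'
  set L' : Set ℝ := L ∪ {b0} with hL'
  have hK'c : IsCompact K' := hKc.union isCompact_singleton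
  have hL'c : IsCompact L' := hLc.union isCompact_singleton
  have hK'A : K' ⊆ A := union_subset hKA (by simpa using ha0)
  have hL'B : L' ⊆ B := union_subset hLB (by simpa using hb0)
  obtain ⟨kmax, hkmem, hkmax⟩ := hK'c.exists_isGreatest ⟨a0, by simp [hK']⟩
  obtain ⟨lmin, hlmem, hlmin⟩ := hL'c.exists_isLeast ⟨b0, by simp [hL']⟩
  set X : Set ℝ := lmin +ᵥ K' with hX
  set Y : Set ℝ := kmax +ᵥ L' with hY
  have hXsub : X ⊆ A + B := by
    rintro z hz
    obtain ⟨k, hk, rfl⟩ := hz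
    refine Set.mem_add.mpr ⟨k, hK'A hk, lmin, hL'B hlmem, ?_⟩
    simpa using add_comm k lmin
  have hYsub : Y ⊆ A + B := by
    rintro z hz
    obtain ⟨l, hl, rfl⟩ := hz
    refine Set.mem_add.mpr ⟨kmax, hK'A hkmem, l, hL'B hl, ?_⟩
    simp
  have hinter : X ∩ Y ⊆ {kmax + lmin} := by
    rintro z ⟨hzX, hzY⟩
    obtain ⟨k, hk, rfl⟩ := hzX
    obtain ⟨l, hl, hl'⟩ := hzY
    simp only [vadd_eq_add, mem_singleton_iff] at hl' ⊢
    have h1 : k ≤ kmax := hkmax hk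
    have h2 : lmin ≤ l := hlmin hl
    linarith [hl']
  have hXm : MeasurableSet X := hK'c.measurableSet.const_vadd lmin
  have hYm : MeasurableSet Y := hL'c.measurableSet.const_vadd kmax
  have hXv : volume X = volume K' := measure_vadd _ _ _
  have hYv : volume Y = volume L' := measure_vadd _ _ _
  have hunion : volume X + volume Y ≤ volume (A + B) := by
    have h0 : volume (X ∩ Y) = 0 :=
      measure_mono_null hinter (measure_singleton _)
    have := measure_union_add_inter (μ := volume) X hYm
    rw [h0, add_zero] at this
    rw [← this]
    exact measure_mono (union_subset hXsub hYsub)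
  have hKK' : volume K ≤ volume K' := measure_mono subset_union_left
  have hLL' : volume L ≤ volume L' := measure_mono subset_union_left
  calc volume A + volume B
      ≤ (volume K' + (ε : ℝ≥0∞)/2) + (volume L' + (ε : ℝ≥0∞)/2) :=
        add_le_add (le_of_lt (hKv.trans_le (add_le_add hKK' le_rfl)))
          (le_of_lt (hLv.trans_le (add_le_add hLL' le_rfl)))
    _ = (volume X + volume Y) + ((ε : ℝ≥0∞)/2 + (ε : ℝ≥0∞)/2) := by
        rw [hXv, hYv]; ring
    _ = (volume X + volume Y) + ε := by rw [ENNReal.add_halves]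
    _ ≤ volume (A + B) + ε := add_le_add hunion le_rfl

/-- Layer cake formula for bounded `ℝ≥0∞`-valued functions. -/
lemma layer_ennreal {F : ℝ → ℝ≥0∞} (hF : Measurable F) (hfin : ∀ t, F t ≠ ⊤) :
    ∫⁻ t, F t = ∫⁻ r in Ioi (0:ℝ), volume {t : ℝ | ENNReal.ofReal r < F t} := by
  have h1 : ∫⁻ t, F t = ∫⁻ t, ENNReal.ofReal ((F t).toReal) := by
    congr 1; funext t; rw [ENNReal.ofReal_toReal (hfin t)]
  rw [h1, lintegral_eq_lintegral_meas_lt volume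
    (Filter.Eventually.of_forall fun t => ENNReal.toReal_nonneg)
    (hF.ennreal_toReal).aemeasurable]
  refine setLIntegral_congr_fun measurableSet_Ioi
    (fun r hr => ?_)
  congr 1
  ext t
  simp only [mem_setOf_eq]
  rw [ENNReal.ofReal_lt_iff_lt_toReal (le_of_lt hr) (hfin t)]

/-- One-dimensional Prékopa–Leindler type inequality (geometric mean case). -/
lemma pl_one_dim (F G Φ : ℝ → ℝ≥0∞) (hF : Measurable F) (hG : Measurable G)
    (hΦ : Measurable Φ)
    (CF CG CΦ : ℝ≥0∞) (hCF : CF ≠ ⊤) (hCG : CG ≠ ⊤) (hCΦ : CΦ ≠ ⊤)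
    (hFb : ∀ t, F t ≤ CF) (hGb : ∀ t, G t ≤ CG) (hΦb : ∀ t, Φ t ≤ CΦ)
    (hFint : ∫⁻ t, F t ≠ ⊤) (hGint : ∫⁻ t, G t ≠ ⊤)
    (hkey : ∀ t u : ℝ, F t * G u ≤ Φ (2⁻¹ * (t + u)) ^ 2) :
    (∫⁻ t, F t) * (∫⁻ t, G t) ≤ (∫⁻ t, Φ t) ^ 2 := by
  set a := ∫⁻ t, F t with ha
  set b := ∫⁻ t, G t with hb
  rcases eq_or_ne a 0 with ha0 | ha0
  · rw [ha0, zero_mul]; exact zero_le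
  rcases eq_or_ne b 0 with hb0 | hb0
  · rw [hb0, mul_zero]; exact zero_le
  have hFfin : ∀ t, F t ≠ ⊤ := fun t => ((hFb t).trans_lt (lt_top_iff_ne_top.mpr hCF)).ne
  have hGfin : ∀ t, G t ≠ ⊤ := fun t => ((hGb t).trans_lt (lt_top_iff_ne_top.mpr hCG)).ne
  have hΦfin : ∀ t, Φ t ≠ ⊤ := fun t => ((hΦb t).trans_lt (lt_top_iff_ne_top.mpr hCΦ)).ne
  have hlayF := layer_ennreal hF hFfin
  have hlayG := layer_ennreal hG hGfin
  have hlayΦ := layer_ennreal hΦ hΦfin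
  -- essential sup-type quantities
  set eF : ℝ≥0∞ := sInf {r : ℝ≥0∞ | volume {t : ℝ | r < F t} = 0} with heF
  set eG : ℝ≥0∞ := sInf {r : ℝ≥0∞ | volume {t : ℝ | r < G t} = 0} with heG
  have heFle : eF ≤ CF := by
    apply sInf_le
    have : {t : ℝ | CF < F t} = ∅ := by
      ext t; simp only [mem_setOf_eq, mem_empty_iff_false, iff_false, not_lt]; exact hFb t
    simp [this]
  have heGle : eG ≤ CG := by
    apply sInf_le
    have : {t : ℝ | CG < G t} = ∅ := by
      ext t; simp only [mem_setOf_eq, mem_empty_iff_false, iff_false, not_lt]; exact hGb t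
    simp [this]
  have heFtop : eF ≠ ⊤ := (heFle.trans_lt (lt_top_iff_ne_top.mpr hCF)).ne
  have heGtop : eG ≠ ⊤ := (heGle.trans_lt (lt_top_iff_ne_top.mpr hCG)).ne
  have hlevF_zero : ∀ r : ℝ≥0∞, eF < r → volume {t : ℝ | r < F t} = 0 := by
    intro r hr
    obtain ⟨s, hs, hsr⟩ := sInf_lt_iff.mp hr
    exact measure_mono_null (fun t ht => lt_trans hsr ht) hs
  have hlevG_zero : ∀ r : ℝ≥0∞, eG < r → volume {t : ℝ | r < G t} = 0 := by
    intro r hr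
    obtain ⟨s, hs, hsr⟩ := sInf_lt_iff.mp hr
    exact measure_mono_null (fun t ht => lt_trans hsr ht) hs
  have hlevF_pos : ∀ r : ℝ≥0∞, r < eF → volume {t : ℝ | r < F t} ≠ 0 := by
    intro r hr hcon
    have : eF ≤ r := sInf_le (show r ∈ {r : ℝ≥0∞ | volume {t : ℝ | r < F t} = 0} from hcon)
    exact absurd this (not_le.mpr hr)
  have hlevG_pos : ∀ r : ℝ≥0∞, r < eG → volume {t : ℝ | r < G t} ≠ 0 := by
    intro r hr hcon
    have : eG ≤ r := sInf_le (show r ∈ {r : ℝ≥0∞ | volume {t : ℝ | r < G t} = 0} from hcon)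
    exact absurd this (not_le.mpr hr)
  have heF0 : eF ≠ 0 := by
    intro hcon
    apply ha0
    rw [ha, hlayF]
    rw [← lintegral_zero (μ := volume.restrict (Ioi (0:ℝ)))]
    refine setLIntegral_congr_fun measurableSet_Ioi
      (fun r hr => ?_)
    exact hlevF_zero _ (by rw [hcon]; exact ENNReal.ofReal_pos.mpr hr)
  have heG0 : eG ≠ 0 := by
    intro hcon
    apply hb0
    rw [hb, hlayG]
    rw [← lintegral_zero (μ := volume.restrict (Ioi (0:ℝ)))]
    refine setLIntegral_congr_fun measurableSet_Ioi
      (fun r hr => ?_)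
    exact hlevG_zero _ (by rw [hcon]; exact ENNReal.ofReal_pos.mpr hr)
  set efr : ℝ := eF.toReal with hefr
  set egr : ℝ := eG.toReal with hegr
  have hefr_pos : 0 < efr := ENNReal.toReal_pos heF0 heFtop
  have hegr_pos : 0 < egr := ENNReal.toReal_pos heG0 heGtop
  have heFofReal : eF = ENNReal.ofReal efr := (ENNReal.ofReal_toReal heFtop).symm
  have heGofReal : eG = ENNReal.ofReal egr := (ENNReal.ofReal_toReal heGtop).symm
  obtain ⟨c, m, hc_pos, hm_pos, hcm, hcm'⟩ :
      ∃ c m : ℝ, 0 < c ∧ 0 < m ∧ c * m = efr ∧ c * egr = m := by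
    refine ⟨Real.sqrt (efr / egr), Real.sqrt (efr * egr),
      Real.sqrt_pos.mpr (by positivity), Real.sqrt_pos.mpr (by positivity), ?_, ?_⟩
    · rw [← Real.sqrt_mul (by positivity)]
      rw [show efr / egr * (efr * egr) = efr ^ 2 by field_simp]
      exact Real.sqrt_sq (le_of_lt hefr_pos)
    · rw [show egr = Real.sqrt (egr ^ 2) from (Real.sqrt_sq (le_of_lt hegr_pos)).symm,
        ← Real.sqrt_mul (by positivity)]
      rw [show egr ^ 2 = egr * egr by ring]
      congr 1
      field_simp
      ring_nf
      rw [Real.sq_sqrt (by positivity)]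
  -- the three level-set functions
  set fA : ℝ → ℝ≥0∞ := fun r => volume {t : ℝ | ENNReal.ofReal (c * r) < F t} with hfA
  set fB : ℝ → ℝ≥0∞ := fun r => volume {t : ℝ | ENNReal.ofReal (c⁻¹ * r) < G t} with hfB
  set fC : ℝ → ℝ≥0∞ := fun r => volume {t : ℝ | ENNReal.ofReal r < Φ t} with hfC
  have hfA_anti : Antitone fA := by
    intro r r' hrr'
    exact measure_mono fun t ht =>
      lt_of_le_of_lt (ENNReal.ofReal_le_ofReal (by nlinarith)) ht
  have hfB_anti : Antitone fB := by
    intro r r' hrr'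
    have hcinv : 0 < c⁻¹ := inv_pos.mpr hc_pos
    exact measure_mono fun t ht =>
      lt_of_le_of_lt (ENNReal.ofReal_le_ofReal (by nlinarith)) ht
  have hfC_anti : Antitone fC := by
    intro r r' hrr'
    exact measure_mono fun t ht =>
      lt_of_le_of_lt (ENNReal.ofReal_le_ofReal hrr') ht
  -- pointwise bound on (0, m)
  have hpt : ∀ r ∈ Ioo (0:ℝ) m, fA r + fB r ≤ 2 * fC r := by
    intro r hr
    obtain ⟨hr0, hrm⟩ := hr
    set A : Set ℝ := {t : ℝ | ENNReal.ofReal (c * r) < F t} with hA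
    set B : Set ℝ := {t : ℝ | ENNReal.ofReal (c⁻¹ * r) < G t} with hB
    have hAm : MeasurableSet A := hF measurableSet_Ioi
    have hBm : MeasurableSet B := hG measurableSet_Ioi
    have hAne : A.Nonempty := by
      apply nonempty_of_measure_ne_zero (μ := volume)
      apply hlevF_pos
      rw [heFofReal]
      apply ENNReal.ofReal_lt_ofReal_iff hefr_pos |>.mpr
      calc c * r < c * m := by exact mul_lt_mul_of_pos_left hrm hc_pos
      _ = efr := hcm
    have hBne : B.Nonempty := by
      apply nonempty_of_measure_ne_zero (μ := volume)
      apply hlevG_pos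
      rw [heGofReal]
      apply ENNReal.ofReal_lt_ofReal_iff hegr_pos |>.mpr
      have : r < c * egr := by rw [hcm']; exact hrm
      calc c⁻¹ * r < c⁻¹ * (c * egr) := by
            exact mul_lt_mul_of_pos_left this (inv_pos.mpr hc_pos)
      _ = egr := by field_simp
    have hAfin : volume A ≠ ⊤ := by
      intro hcon
      apply hFint
      have hmarkov := mul_meas_ge_le_lintegral₀ (μ := volume) hF.aemeasurable (ENNReal.ofReal (c * r))
      have hsub : A ⊆ {t : ℝ | ENNReal.ofReal (c * r) ≤ F t} := fun t ht => mem_setOf_eq ▸ le_of_lt ht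
      have : ENNReal.ofReal (c * r) * volume A ≤ a :=
        le_trans (mul_le_mul' le_rfl (measure_mono hsub)) hmarkov
      rw [hcon, ENNReal.mul_top (ne_of_gt (ENNReal.ofReal_pos.mpr (by positivity)))] at this
      exact top_le_iff.mp this
    have hBfin : volume B ≠ ⊤ := by
      intro hcon
      apply hGint
      have hmarkov := mul_meas_ge_le_lintegral₀ (μ := volume) hG.aemeasurable (ENNReal.ofReal (c⁻¹ * r))
      have hsub : B ⊆ {t : ℝ | ENNReal.ofReal (c⁻¹ * r) ≤ G t} := fun t ht => mem_setOf_eq ▸ le_of_lt ht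
      have : ENNReal.ofReal (c⁻¹ * r) * volume B ≤ b :=
        le_trans (mul_le_mul' le_rfl (measure_mono hsub)) hmarkov
      rw [hcon, ENNReal.mul_top (ne_of_gt (ENNReal.ofReal_pos.mpr
        (by positivity)))] at this
      exact top_le_iff.mp this
    have hsum := sumset_one_dim hAm hBm hAne hBne hAfin hBfin
    have hsmul : volume ((2⁻¹ : ℝ) • (A + B)) =
        ENNReal.ofReal 2⁻¹ * volume (A + B) := by
      rw [Measure.addHaar_smul]
      congr 2
      simp [abs_of_pos]
    have hincl : (2⁻¹ : ℝ) • (A + B) ⊆ {s : ℝ | ENNReal.ofReal r < Φ s} := by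
      rintro z ⟨w, hw, rfl⟩
      obtain ⟨t, ht, u, hu, rfl⟩ := Set.mem_add.mp hw
      simp only [smul_eq_mul, mem_setOf_eq]
      have hprod : ENNReal.ofReal r ^ 2 < F t * G u := by
        have h1 : ENNReal.ofReal (c * r) < F t := ht
        have h2 : ENNReal.ofReal (c⁻¹ * r) < G u := hu
        have heq : ENNReal.ofReal (c * r) * ENNReal.ofReal (c⁻¹ * r) =
            ENNReal.ofReal r ^ 2 := by
          rw [← ENNReal.ofReal_mul (by positivity)]
          rw [show c * r * (c⁻¹ * r) = r * r by field_simp]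
          rw [pow_two, ← ENNReal.ofReal_mul (le_of_lt hr0)]
        calc ENNReal.ofReal r ^ 2 = ENNReal.ofReal (c * r) * ENNReal.ofReal (c⁻¹ * r) :=
              heq.symm
        _ < F t * ENNReal.ofReal (c⁻¹ * r) := by
              exact (ENNReal.mul_lt_mul_iff_left
                (ne_of_gt (ENNReal.ofReal_pos.mpr (by positivity)))
                ENNReal.ofReal_ne_top).mpr h1
        _ ≤ F t * G u := mul_le_mul' le_rfl (le_of_lt h2)
      by_contra hcon
      push_neg at hcon
      have : Φ (2⁻¹ * (t + u)) ^ 2 ≤ ENNReal.ofReal r ^ 2 := by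
        rw [pow_two, pow_two]; exact mul_le_mul' hcon hcon
      exact absurd ((hkey t u).trans this) (not_le.mpr hprod)
    calc fA r + fB r ≤ volume (A + B) := hsum
    _ = 2 * (ENNReal.ofReal 2⁻¹ * volume (A + B)) := by
        rw [← mul_assoc]
        rw [show ENNReal.ofReal 2⁻¹ = (2:ℝ≥0∞)⁻¹ by
          rw [ENNReal.ofReal_inv_of_pos (by norm_num)]; norm_num]
        rw [ENNReal.mul_inv_cancel (by norm_num) (by norm_num), one_mul]
    _ = 2 * volume ((2⁻¹ : ℝ) • (A + B)) := by rw [hsmul]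
    _ ≤ 2 * fC r := by
        exact mul_le_mul' le_rfl (measure_mono hincl)
  -- change of variables for fA
  have hchangeF : ∫⁻ r in Ioo (0:ℝ) m, fA r = ENNReal.ofReal c⁻¹ * a := by
    have hmap : Measure.map (fun r : ℝ => c * r) volume =
        ENNReal.ofReal |c⁻¹| • volume := Real.map_volume_mul_left (ne_of_gt hc_pos)
    have hpre : (fun r : ℝ => c * r) ⁻¹' (Ioo 0 efr) = Ioo 0 m := by
      ext r
      simp only [mem_preimage, mem_Ioo]
      constructor
      · rintro ⟨h1, h2⟩
        have hr0 : 0 < r := by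
          by_contra hcon
          push_neg at hcon
          nlinarith
        refine ⟨hr0, ?_⟩
        rw [← hcm] at h2
        exact lt_of_mul_lt_mul_left h2 hc_pos.le
      · rintro ⟨h1, h2⟩
        exact ⟨by positivity, by rw [← hcm]; exact mul_lt_mul_of_pos_left h2 hc_pos⟩
    have hfCmeas : Measurable (fun s : ℝ => volume {t : ℝ | ENNReal.ofReal s < F t}) := by
      have : Antitone (fun s : ℝ => volume {t : ℝ | ENNReal.ofReal s < F t}) := by
        intro s s' hss'
        exact measure_mono fun t ht =>
          lt_of_le_of_lt (ENNReal.ofReal_le_ofReal hss') ht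
      exact this.measurable
    have key : ∫⁻ s in Ioo (0:ℝ) efr, volume {t : ℝ | ENNReal.ofReal s < F t}
        ∂(Measure.map (fun r : ℝ => c * r) volume) =
        ∫⁻ r in Ioo (0:ℝ) m, fA r := by
      rw [setLIntegral_map measurableSet_Ioo hfCmeas (measurable_const_mul c)]
      rw [hpre]
    rw [← key, hmap]
    rw [Measure.restrict_smul, lintegral_smul_measure]
    have htail : ∫⁻ s in Ioo (0:ℝ) efr, volume {t : ℝ | ENNReal.ofReal s < F t} = a := by
      rw [ha, hlayF]
      rw [← Ioo_union_Ici_eq_Ioi hefr_pos]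
      rw [lintegral_union measurableSet_Ici
        (by rw [Set.disjoint_left]; rintro s ⟨_, h2⟩ h3; exact absurd (mem_Ici.mp h3) (not_le.mpr h2))]
      have hzero : ∫⁻ s in Ici efr, volume {t : ℝ | ENNReal.ofReal s < F t} = 0 := by
        have hae : ∀ᵐ s : ℝ, s ∈ Ici efr → volume {t : ℝ | ENNReal.ofReal s < F t} = 0 := by
          filter_upwards [(measure_eq_zero_iff_ae_notMem.mp (measure_singleton efr))] with s hs hmem
          have hslt : efr < s := lt_of_le_of_ne (mem_Ici.mp hmem) (Ne.symm hs)
          apply hlevF_zero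
          rw [heFofReal]
          exact ENNReal.ofReal_lt_ofReal_iff (lt_trans hefr_pos hslt) |>.mpr hslt
        calc ∫⁻ s in Ici efr, volume {t : ℝ | ENNReal.ofReal s < F t}
            = ∫⁻ _ in Ici efr, (0:ℝ≥0∞) := setLIntegral_congr_fun_ae measurableSet_Ici hae
        _ = 0 := by simp
      rw [hzero, add_zero]
    rw [htail, abs_of_pos (inv_pos.mpr hc_pos), smul_eq_mul]
  -- change of variables for fB
  have hchangeG : ∫⁻ r in Ioo (0:ℝ) m, fB r = ENNReal.ofReal c * b := by
    have hcinv_pos : 0 < c⁻¹ := inv_pos.mpr hc_pos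
    have hmap : Measure.map (fun r : ℝ => c⁻¹ * r) volume =
        ENNReal.ofReal |c⁻¹⁻¹| • volume := Real.map_volume_mul_left (ne_of_gt hcinv_pos)
    have hpre : (fun r : ℝ => c⁻¹ * r) ⁻¹' (Ioo 0 egr) = Ioo 0 m := by
      ext r
      simp only [mem_preimage, mem_Ioo]
      constructor
      · rintro ⟨h1, h2⟩
        have hr0 : (0:ℝ) < r := by nlinarith
        refine ⟨hr0, ?_⟩
        have := mul_lt_mul_of_pos_left h2 hc_pos
        rw [← mul_assoc, mul_inv_cancel₀ (ne_of_gt hc_pos), one_mul, hcm'] at this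
        exact this
      · rintro ⟨h1, h2⟩
        constructor
        · positivity
        · have := mul_lt_mul_of_pos_left h2 hcinv_pos
          rw [← hcm'] at this
          rw [← mul_assoc, inv_mul_cancel₀ (ne_of_gt hc_pos), one_mul] at this
          exact this
    have hfCmeas : Measurable (fun s : ℝ => volume {t : ℝ | ENNReal.ofReal s < G t}) := by
      have : Antitone (fun s : ℝ => volume {t : ℝ | ENNReal.ofReal s < G t}) := by
        intro s s' hss'
        exact measure_mono fun t ht =>
          lt_of_le_of_lt (ENNReal.ofReal_le_ofReal hss') ht
      exact this.measurable
    have key : ∫⁻ s in Ioo (0:ℝ) egr, volume {t : ℝ | ENNReal.ofReal s < G t}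
        ∂(Measure.map (fun r : ℝ => c⁻¹ * r) volume) =
        ∫⁻ r in Ioo (0:ℝ) m, fB r := by
      rw [setLIntegral_map measurableSet_Ioo hfCmeas (measurable_const_mul c⁻¹)]
      rw [hpre]
    rw [← key, hmap]
    rw [Measure.restrict_smul, lintegral_smul_measure]
    have htail : ∫⁻ s in Ioo (0:ℝ) egr, volume {t : ℝ | ENNReal.ofReal s < G t} = b := by
      rw [hb, hlayG]
      rw [← Ioo_union_Ici_eq_Ioi hegr_pos]
      rw [lintegral_union measurableSet_Ici
        (by rw [Set.disjoint_left]; rintro s ⟨_, h2⟩ h3; exact absurd (mem_Ici.mp h3) (not_le.mpr h2))]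
      have hzero : ∫⁻ s in Ici egr, volume {t : ℝ | ENNReal.ofReal s < G t} = 0 := by
        have hae : ∀ᵐ s : ℝ, s ∈ Ici egr → volume {t : ℝ | ENNReal.ofReal s < G t} = 0 := by
          filter_upwards [(measure_eq_zero_iff_ae_notMem.mp (measure_singleton egr))] with s hs hmem
          have hslt : egr < s := lt_of_le_of_ne (mem_Ici.mp hmem) (Ne.symm hs)
          apply hlevG_zero
          rw [heGofReal]
          exact ENNReal.ofReal_lt_ofReal_iff (lt_trans hegr_pos hslt) |>.mpr hslt
        calc ∫⁻ s in Ici egr, volume {t : ℝ | ENNReal.ofReal s < G t}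
            = ∫⁻ _ in Ici egr, (0:ℝ≥0∞) := setLIntegral_congr_fun_ae measurableSet_Ici hae
        _ = 0 := by simp
      rw [hzero, add_zero]
    rw [htail, abs_of_pos (by positivity), inv_inv, smul_eq_mul]
  -- integrate the pointwise bound
  have hint : ENNReal.ofReal c⁻¹ * a + ENNReal.ofReal c * b ≤ 2 * ∫⁻ t, Φ t := by
    rw [← hchangeF, ← hchangeG]
    rw [← lintegral_add_left hfA_anti.measurable]
    calc ∫⁻ r in Ioo (0:ℝ) m, (fA r + fB r)
        ≤ ∫⁻ r in Ioo (0:ℝ) m, 2 * fC r :=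
          setLIntegral_mono ((hfC_anti.measurable).const_mul 2) (fun r hr => hpt r hr)
      _ = 2 * ∫⁻ r in Ioo (0:ℝ) m, fC r := lintegral_const_mul 2 hfC_anti.measurable
      _ ≤ 2 * ∫⁻ r in Ioi (0:ℝ), fC r := by
          exact mul_le_mul' le_rfl (lintegral_mono_set (fun r hr => hr.1))
      _ = 2 * ∫⁻ t, Φ t := by rw [← hlayΦ]
  -- conclude by AM-GM
  have hXY : (ENNReal.ofReal c⁻¹ * a) * (ENNReal.ofReal c * b) = a * b := by
    rw [show (ENNReal.ofReal c⁻¹ * a) * (ENNReal.ofReal c * b) =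
      (ENNReal.ofReal c⁻¹ * ENNReal.ofReal c) * (a * b) by ring]
    rw [← ENNReal.ofReal_mul (by positivity), inv_mul_cancel₀ (ne_of_gt hc_pos),
      ENNReal.ofReal_one, one_mul]
  calc a * b = (ENNReal.ofReal c⁻¹ * a) * (ENNReal.ofReal c * b) := hXY.symm
  _ ≤ (∫⁻ t, Φ t) ^ 2 := sq_helper _ _ _ hint

lemma midSet_compact {E : Type*} [AddCommGroup E] [Module ℝ E] [TopologicalSpace E]
    [IsTopologicalAddGroup E] [ContinuousSMul ℝ E] {A B : Set E}
    (hA : IsCompact A) (hB : IsCompact B) : IsCompact (midSet A B) :=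
  (hA.prod hB).image ((continuous_fst.add continuous_snd).const_smul (2⁻¹ : ℝ))

/-- Multiplicative Brunn–Minkowski-type inequality for compact sets in `Fin n → ℝ`. -/
lemma bm_pi : ∀ n : ℕ, ∀ K L : Set (Fin n → ℝ), IsCompact K → IsCompact L →
    K.Nonempty → L.Nonempty → volume K * volume L ≤ volume (midSet K L) ^ 2 := by
  intro n
  induction n with
  | zero =>
    intro K L hK hL hKne hLne
    have huniv : ∀ s : Set (Fin 0 → ℝ), s.Nonempty → s = univ := by
      intro s ⟨w, hw⟩
      refine eq_univ_iff_forall.mpr fun z => ?_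
      rwa [Subsingleton.elim z w]
    have hvol1 : volume (univ : Set (Fin 0 → ℝ)) = 1 := by
      rw [MeasureTheory.volume_pi, Measure.pi_univ]
      simp
    have hmne : (midSet K L).Nonempty := by
      obtain ⟨u, hu⟩ := hKne
      obtain ⟨v, hv⟩ := hLne
      exact ⟨_, mem_midSet.mpr ⟨u, hu, v, hv, rfl⟩⟩
    rw [huniv _ hmne, huniv K hKne, huniv L hLne, hvol1]
    norm_num
  | succ n ih =>
    intro K L hK hL hKne hLne
    set e := MeasurableEquiv.piFinSuccAbove (fun _ : Fin (n+1) => ℝ) 0 with he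
    have hmp : MeasurePreserving e volume volume :=
      volume_preserving_piFinSuccAbove (fun _ : Fin (n+1) => ℝ) 0
    have hecont : Continuous e := by
      have : ⇑e = fun f : Fin (n+1) → ℝ => (f 0, fun j : Fin n => f ((0:Fin (n+1)).succAbove j)) := rfl
      rw [this]
      exact (continuous_apply 0).prodMk (continuous_pi fun j => continuous_apply _)
    have hadd : ∀ u v : Fin (n+1) → ℝ, e ((2⁻¹:ℝ) • (u + v)) = (2⁻¹:ℝ) • (e u + e v) := by
      intro u v
      rfl
    have himg : ∀ A B : Set (Fin (n+1) → ℝ), e '' midSet A B = midSet (e '' A) (e '' B) := by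
      intro A B
      ext z
      constructor
      · rintro ⟨w, hw, rfl⟩
        obtain ⟨u, hu, v, hv, rfl⟩ := mem_midSet.mp hw
        exact mem_midSet.mpr ⟨e u, ⟨u, hu, rfl⟩, e v, ⟨v, hv, rfl⟩, hadd u v⟩
      · intro hz
        obtain ⟨u', ⟨u, hu, rfl⟩, v', ⟨v, hv, rfl⟩, rfl⟩ := mem_midSet.mp hz
        exact ⟨(2⁻¹:ℝ) • (u + v), mem_midSet.mpr ⟨u, hu, v, hv, rfl⟩, hadd u v⟩
    have hveq : ∀ s : Set (Fin (n+1) → ℝ), MeasurableSet s → volume (e '' s) = volume s := by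
      intro s hs
      rw [MeasurableEquiv.image_eq_preimage_symm]
      exact (MeasurePreserving.symm e hmp).measure_preimage hs.nullMeasurableSet
    set K' := e '' K with hK'
    set L' := e '' L with hL'
    have hK'c : IsCompact K' := hK.image hecont
    have hL'c : IsCompact L' := hL.image hecont
    have hK'ne : K'.Nonempty := hKne.image _
    have hL'ne : L'.Nonempty := hLne.image _
    have hMc : IsCompact (midSet K' L') := midSet_compact hK'c hL'c
    have hK'm : MeasurableSet K' := hK'c.measurableSet
    have hL'm : MeasurableSet L' := hL'c.measurableSet
    have hMm : MeasurableSet (midSet K' L') := hMc.measurableSet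
    -- slice functions
    set F : ℝ → ℝ≥0∞ := fun t => volume (Prod.mk t ⁻¹' K') with hF
    set G : ℝ → ℝ≥0∞ := fun t => volume (Prod.mk t ⁻¹' L') with hG
    set Φ : ℝ → ℝ≥0∞ := fun t => volume (Prod.mk t ⁻¹' (midSet K' L')) with hΦ
    have hFmeas : Measurable F := measurable_measure_prodMk_left hK'm
    have hGmeas : Measurable G := measurable_measure_prodMk_left hL'm
    have hΦmeas : Measurable Φ := measurable_measure_prodMk_left hMm
    have hFub : ∀ (s : Set (ℝ × (Fin n → ℝ))), MeasurableSet s →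
        volume s = ∫⁻ t, volume (Prod.mk t ⁻¹' s) := by
      intro s hs
      rw [MeasureTheory.Measure.volume_eq_prod, Measure.prod_apply hs]
    -- compactness of slices
    have hslice : ∀ (s : Set (ℝ × (Fin n → ℝ))), IsCompact s → ∀ t,
        IsCompact (Prod.mk t ⁻¹' s) := by
      intro s hs t
      refine IsCompact.of_isClosed_subset (hs.image continuous_snd)
        (hs.isClosed.preimage (Continuous.prodMk_right t)) ?_
      intro x hx
      exact ⟨(t, x), hx, rfl⟩
    have hbound : ∀ (s : Set (ℝ × (Fin n → ℝ))), IsCompact s → ∀ t,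
        volume (Prod.mk t ⁻¹' s) ≤ volume (Prod.snd '' s) := by
      intro s hs t
      exact measure_mono fun x hx => ⟨(t, x), hx, rfl⟩
    -- the key pointwise inequality
    have hkey : ∀ t u : ℝ, F t * G u ≤ Φ (2⁻¹ * (t + u)) ^ 2 := by
      intro t u
      rcases (Prod.mk t ⁻¹' K').eq_empty_or_nonempty with hemp | hne1
      · rw [hF]; simp only [hemp, measure_empty, zero_mul]; exact zero_le
      rcases (Prod.mk u ⁻¹' L').eq_empty_or_nonempty with hemp | hne2
      · rw [hG]; simp only [hemp, measure_empty, mul_zero]; exact zero_le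
      have hih := ih (Prod.mk t ⁻¹' K') (Prod.mk u ⁻¹' L')
        (hslice _ hK'c t) (hslice _ hL'c u) hne1 hne2
      refine hih.trans ?_
      have hincl : midSet (Prod.mk t ⁻¹' K') (Prod.mk u ⁻¹' L') ⊆
          Prod.mk (2⁻¹ * (t + u)) ⁻¹' (midSet K' L') := by
        intro z hz
        obtain ⟨p, hp, q, hq, rfl⟩ := mem_midSet.mp hz
        exact mem_midSet.mpr ⟨(t, p), hp, (u, q), hq, rfl⟩
      have := measure_mono (μ := volume) hincl
      rw [pow_two, pow_two]
      exact mul_le_mul' this this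
    -- apply the one-dimensional inequality
    have hsndK := (hK'c.image continuous_snd).measure_lt_top (μ := volume)
    have hsndL := (hL'c.image continuous_snd).measure_lt_top (μ := volume)
    have hsndM := (hMc.image continuous_snd).measure_lt_top (μ := volume)
    have hres := pl_one_dim F G Φ hFmeas hGmeas hΦmeas
      (volume (Prod.snd '' K')) (volume (Prod.snd '' L')) (volume (Prod.snd '' (midSet K' L')))
      hsndK.ne hsndL.ne hsndM.ne
      (hbound _ hK'c) (hbound _ hL'c) (hbound _ hMc)
      (by rw [← hFub _ hK'm]; exact hK'c.measure_lt_top.ne)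
      (by rw [← hFub _ hL'm]; exact hL'c.measure_lt_top.ne)
      hkey
    rw [← hFub _ hK'm, ← hFub _ hL'm, ← hFub _ hMm] at hres
    calc volume K * volume L = volume K' * volume L' := by
          rw [hveq K hK.measurableSet, hveq L hL.measurableSet]
    _ ≤ volume (midSet K' L') ^ 2 := hres
    _ = volume (midSet K L) ^ 2 := by
          rw [← himg, hveq _ (midSet_compact hK hL).measurableSet]

/-- Key measure-theoretic fact (consequence of Brunn–Minkowski):
a compact set has volume at most that of its midpoint set with its negation. -/
lemma volume_le_midSet_neg {d : ℕ} (K : Set (EuclideanSpace ℝ (Fin d)))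
    (hK : IsCompact K) (hKne : K.Nonempty) :
    volume K ≤ volume (midSet K (-K)) := by
  set em := (MeasurableEquiv.toLp 2 (Fin d → ℝ)).symm with hem
  have hmp : MeasurePreserving em volume volume :=
    EuclideanSpace.volume_preserving_symm_measurableEquiv_toLp (Fin d)
  set κ := PiLp.continuousLinearEquiv 2 ℝ (fun _ : Fin d => ℝ) with hκ
  have hcoe : ⇑em = ⇑κ := rfl
  have hveq : ∀ s : Set (EuclideanSpace ℝ (Fin d)), MeasurableSet s →
      volume (⇑em '' s) = volume s := by
    intro s hs
    rw [MeasurableEquiv.image_eq_preimage_symm]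
    exact (MeasurePreserving.symm em hmp).measure_preimage hs.nullMeasurableSet
  have hadd : ∀ u v : EuclideanSpace ℝ (Fin d),
      em ((2⁻¹:ℝ) • (u + v)) = (2⁻¹:ℝ) • (em u + em v) := by
    intro u v
    rw [hcoe]
    simp [map_add, _root_.map_smul]
  have himg : ∀ A B : Set (EuclideanSpace ℝ (Fin d)),
      ⇑em '' midSet A B = midSet (⇑em '' A) (⇑em '' B) := by
    intro A B
    ext z
    constructor
    · rintro ⟨w, hw, rfl⟩
      obtain ⟨u, hu, v, hv, rfl⟩ := mem_midSet.mp hw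
      exact mem_midSet.mpr ⟨em u, ⟨u, hu, rfl⟩, em v, ⟨v, hv, rfl⟩, hadd u v⟩
    · intro hz
      obtain ⟨u', ⟨u, hu, rfl⟩, v', ⟨v, hv, rfl⟩, rfl⟩ := mem_midSet.mp hz
      exact ⟨(2⁻¹:ℝ) • (u + v), mem_midSet.mpr ⟨u, hu, v, hv, rfl⟩, hadd u v⟩
  have hnegimg : ⇑em '' (-K) = -(⇑em '' K) := by
    ext z
    constructor
    · rintro ⟨w, hw, rfl⟩
      refine Set.mem_neg.mpr ⟨-w, hw, ?_⟩
      rw [hcoe]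
      simp [map_neg]
    · intro hz
      obtain ⟨w, hw, hw'⟩ := Set.mem_neg.mp hz
      refine ⟨-w, by simpa using hw, ?_⟩
      rw [hcoe]
      rw [hcoe] at hw'
      rw [map_neg, hw', neg_neg]
  set K' := ⇑em '' K with hK'
  have hK'c : IsCompact K' := by
    rw [hK', hcoe]
    exact hK.image κ.continuous
  have hK'ne : K'.Nonempty := hKne.image _
  have hKneg : IsCompact (-K) := hK.neg
  have hmidc : IsCompact (midSet K (-K)) := midSet_compact hK hKneg
  have hbm := bm_pi d K' (-K') hK'c hK'c.neg hK'ne (by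
    obtain ⟨w, hw⟩ := hK'ne
    exact ⟨-w, by simpa using hw⟩)
  have hnegvol : volume (-K') = volume K' := Measure.measure_neg volume K'
  have hmid_eq : volume (midSet K' (-K')) = volume (midSet K (-K)) := by
    rw [← hnegimg, ← himg]
    exact hveq _ hmidc.measurableSet
  have hKvol : volume K' = volume K := hveq K hK.measurableSet
  rw [hnegvol, hKvol, hmid_eq] at hbm
  by_contra hcon
  push_neg at hcon
  have hlt := ENNReal.pow_lt_pow_left (two_ne_zero) hcon
  have : volume K * volume K ≤ volume (midSet K (-K)) ^ 2 := hbm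
  rw [← pow_two] at this
  exact absurd (lt_of_le_of_lt this hlt) (by simp)

/-- Intermediate value theorem for distances on preconnected sets. -/
lemma exists_dist_eq' {X : Type*} [PseudoMetricSpace X] {C : Set X}
    (hC : IsPreconnected C) {p u w : X} (hu : u ∈ C) (hw : w ∈ C) {r : ℝ}
    (h1 : dist p u ≤ r) (h2 : r ≤ dist p w) : ∃ z ∈ C, dist p z = r := by
  have himg : IsPreconnected ((dist p) '' C) :=
    hC.image _ (Continuous.continuousOn (continuous_const.dist continuous_id))
  have : r ∈ (dist p) '' C :=
    himg.Icc_subset ⟨u, hu, rfl⟩ ⟨w, hw, rfl⟩ ⟨h1, h2⟩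
  obtain ⟨z, hz, hz'⟩ := this
  exact ⟨z, hz, hz'⟩

theorem components_with_large_volume_are_far_apart
    (d : ℕ) (P : Set (EuclideanSpace ℝ (Fin d))) (hP : IsOpen P)
    (havoid : ∀ x ∈ P, ∀ y ∈ P, ∀ n : ℕ, 0 < n → dist x y ≠ n)
    (x y : EuclideanSpace ℝ (Fin d)) (hx : x ∈ P) (hy : y ∈ P)
    (hne : connectedComponentIn P x ≠ connectedComponentIn P y)
    (hvol : volume (ball (0 : EuclideanSpace ℝ (Fin d)) (1/2)) <
      volume (connectedComponentIn P x ∪ connectedComponentIn P y)) :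
    1 ≤ setDist (connectedComponentIn P x) (connectedComponentIn P y) := by
  by_contra h
  set C₁ := connectedComponentIn P x with hC₁
  set C₂ := connectedComponentIn P y with hC₂
  have hxC : x ∈ C₁ := mem_connectedComponentIn hx
  have hyC : y ∈ C₂ := mem_connectedComponentIn hy
  have hC₁P : C₁ ⊆ P := connectedComponentIn_subset P x
  have hC₂P : C₂ ⊆ P := connectedComponentIn_subset P y
  have hc₁ : IsPreconnected C₁ := isPreconnected_connectedComponentIn
  have hc₂ : IsPreconnected C₂ := isPreconnected_connectedComponentIn
  -- a forbidden distance fact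
  have hforb : ∀ u ∈ P, ∀ v ∈ P, dist u v ≠ 1 := by
    intro u hu v hv
    have := havoid u hu v hv 1 one_pos
    simpa using this
  -- within a preconnected subset of P all distances are < 1
  have hwithin : ∀ (C : Set (EuclideanSpace ℝ (Fin d))), IsPreconnected C → C ⊆ P →
      ∀ u ∈ C, ∀ v ∈ C, dist u v < 1 := by
    intro C hC hCP u hu v hv
    by_contra hge
    push_neg at hge
    obtain ⟨z, hz, hz1⟩ := exists_dist_eq' hC hu hv (by simp) hge
    exact hforb u (hCP hu) z (hCP hz) hz1
  -- from the negated conclusion, get points at distance < 1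
  have hlt : sInf {r : ℝ | ∃ u ∈ C₁, ∃ v ∈ C₂, r = dist u v} < 1 := not_le.mp h
  obtain ⟨r, ⟨a, ha, b, hb, rfl⟩, hr1⟩ :=
    exists_lt_of_csInf_lt ⟨dist x y, by exact ⟨x, hxC, y, hyC, rfl⟩⟩ hlt
  -- all points of C₁ are at distance < 1 from b
  have hC₁b : ∀ p ∈ C₁, dist b p < 1 := by
    intro p hp
    by_contra hge
    push_neg at hge
    obtain ⟨z, hz, hz1⟩ := exists_dist_eq' hc₁ ha hp (le_of_lt (by rwa [dist_comm])) hge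
    exact hforb b (hC₂P hb) z (hC₁P hz) hz1
  -- all cross distances are < 1
  have hcross : ∀ p ∈ C₁, ∀ q ∈ C₂, dist p q < 1 := by
    intro p hp q hq
    by_contra hge
    push_neg at hge
    obtain ⟨z, hz, hz1⟩ := exists_dist_eq' hc₂ hb hq (le_of_lt (by rw [dist_comm]; exact hC₁b p hp)) hge
    exact hforb p (hC₁P hp) z (hC₂P hz) hz1
  -- all pairwise distances within S := C₁ ∪ C₂ are < 1
  set S := C₁ ∪ C₂ with hS
  have hSdist : ∀ u ∈ S, ∀ v ∈ S, dist u v < 1 := by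
    rintro u (hu | hu) v (hv | hv)
    · exact hwithin C₁ hc₁ hC₁P u hu v hv
    · exact hcross u hu v hv
    · rw [dist_comm]; exact hcross v hv u hu
    · exact hwithin C₂ hc₂ hC₂P u hu v hv
  -- hence every compact subset has volume at most that of the ball of radius 1/2
  have hcomp : ∀ K : Set (EuclideanSpace ℝ (Fin d)), IsCompact K → K ⊆ S →
      volume K ≤ volume (ball (0 : EuclideanSpace ℝ (Fin d)) (1/2)) := by
    intro K hK hKS
    rcases K.eq_empty_or_nonempty with rfl | hKne
    · simp
    refine (volume_le_midSet_neg K hK hKne).trans (measure_mono ?_)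
    rintro z hz
    rw [mem_midSet] at hz
    obtain ⟨u, hu, v, hv, rfl⟩ := hz
    obtain ⟨v', hv', rfl⟩ : ∃ v' ∈ K, -v' = v := by
      rcases Set.mem_neg.mp hv with hv'
      exact ⟨-v, by simpa using hv', by simp⟩
    have hd : dist u v' < 1 := hSdist u (hKS hu) v' (hKS hv')
    rw [mem_ball, dist_zero_right, norm_smul]
    have : ‖u + -v'‖ = dist u v' := by rw [dist_eq_norm, sub_eq_add_neg]
    rw [this]
    have h2 : ‖(2⁻¹:ℝ)‖ = 2⁻¹ := by norm_num
    rw [h2]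
    linarith
  -- inner regularity: volume S ≤ volume (ball 0 (1/2))
  have hSopen : IsOpen S := (hP.connectedComponentIn).union (hP.connectedComponentIn)
  have hreg : volume S ≤ volume (ball (0 : EuclideanSpace ℝ (Fin d)) (1/2)) := by
    rw [hSopen.measure_eq_iSup_isCompact]
    exact iSup_le fun K => iSup_le fun hKS => iSup_le fun hK => hcomp K hK hKS
  exact absurd (hvol.trans_le hreg) (lt_irrefl _)
end

section
/- Suppose that for every open set P ⊆ ℝ^d with exactly n connected components, each of diameter at most 1, and with no pair of points at positive integer distance, one has λ_d(P) ≤ Λ. Then for every integer k ≥ n, every such open set with exactly k connected components satisfies λ_d(P) ≤ (k/n)·Λ. -/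
open Metric MeasureTheory

theorem averaging_upper_bound
    (d n : ℕ) (hn : 1 ≤ n) (Λ : ENNReal)
    (H : ∀ P : Set (EuclideanSpace ℝ (Fin d)), IsOpen P →
      {C | ∃ x ∈ P, C = connectedComponentIn P x}.ncard = n →
      (∀ x ∈ P, Metric.diam (connectedComponentIn P x) ≤ 1) →
      (∀ x ∈ P, ∀ y ∈ P, ∀ m : ℕ, 0 < m → dist x y ≠ m) →
      volume P ≤ Λ) :
    ∀ k : ℕ, n ≤ k → ∀ P : Set (EuclideanSpace ℝ (Fin d)), IsOpen P →
      {C | ∃ x ∈ P, C = connectedComponentIn P x}.ncard = k →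
      (∀ x ∈ P, Metric.diam (connectedComponentIn P x) ≤ 1) →
      (∀ x ∈ P, ∀ y ∈ P, ∀ m : ℕ, 0 < m → dist x y ≠ m) →
      volume P ≤ ((k : ENNReal) / (n : ENNReal)) * Λ := by
  classical
  intro k hk P hP hcard hdiam hdist
  have hn0 : (n : ENNReal) ≠ 0 := by exact_mod_cast (by omega : n ≠ 0)
  have hnT : (n : ENNReal) ≠ ⊤ := ENNReal.natCast_ne_top n
  rcases eq_or_ne Λ ⊤ with rfl | hΛ
  · have hk0 : (k : ENNReal) ≠ 0 := by exact_mod_cast (by omega : k ≠ 0)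
    rw [ENNReal.mul_top (by simp [ENNReal.div_eq_zero_iff, hk0, hnT])]
    exact le_top
  set 𝒞 := {C : Set (EuclideanSpace ℝ (Fin d)) | ∃ x ∈ P, C = connectedComponentIn P x}
    with h𝒞
  have hfin : 𝒞.Finite := by
    by_contra h
    rw [Set.Infinite.ncard h] at hcard
    omega
  have hopenC : ∀ C ∈ 𝒞, IsOpen C := by
    rintro C ⟨x, hx, rfl⟩; exact hP.connectedComponentIn
  have hsubC : ∀ C ∈ 𝒞, C ⊆ P := by
    rintro C ⟨x, hx, rfl⟩; exact connectedComponentIn_subset _ _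
  have hcomp_of_mem : ∀ C ∈ 𝒞, ∀ x ∈ C, connectedComponentIn P x = C := by
    rintro C ⟨y, hy, rfl⟩ x hx; exact (connectedComponentIn_eq (x := y) (y := x) hx).symm
  have hdisj : (𝒞 : Set (Set (EuclideanSpace ℝ (Fin d)))).PairwiseDisjoint id := by
    intro C hC C' hC' hne
    simp only [Function.onFun, id_eq]
    rw [Set.disjoint_left]
    intro x hx hx'
    exact hne (((hcomp_of_mem C hC x hx).symm.trans (hcomp_of_mem C' hC' x hx')))
  set F := hfin.toFinset with hF
  have hFmem : ∀ C, C ∈ F ↔ C ∈ 𝒞 := fun C => hfin.mem_toFinset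
  have hFcard : F.card = k := by rw [← Set.ncard_coe_finset, hfin.coe_toFinset]; exact hcard
  -- volume of a union of a subfamily of components equals the sum
  have hvol_union : ∀ S : Finset (Set (EuclideanSpace ℝ (Fin d))), S ⊆ F →
      volume (⋃ C ∈ S, C) = ∑ C ∈ S, volume C := by
    intro S hS
    refine measure_biUnion_finset (fun C hC C' hC' hne => hdisj ((hFmem C).1 (hS hC))
      ((hFmem C').1 (hS hC')) hne) (fun C hC => (hopenC C ((hFmem C).1 (hS hC))).measurableSet)
  -- P is the union of all components
  have hPunion : P = ⋃ C ∈ F, C := by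
    apply Set.Subset.antisymm
    · intro x hx
      exact Set.mem_biUnion ((hFmem _).2 ⟨x, hx, rfl⟩) (mem_connectedComponentIn hx)
    · exact Set.iUnion₂_subset fun C hC => hsubC C ((hFmem C).1 hC)
  -- key claim: the sum of volumes over any n components is at most Λ
  have hkey : ∀ S : Finset (Set (EuclideanSpace ℝ (Fin d))), S ⊆ F → S.card = n →
      ∑ C ∈ S, volume C ≤ Λ := by
    intro S hSF hScard
    set Q := ⋃ C ∈ S, C with hQ
    have hQsubsets : ∀ C ∈ S, C ⊆ Q := fun C hC => Set.subset_biUnion_of_mem (u := fun C => C) hC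
    have hQP : Q ⊆ P := Set.iUnion₂_subset fun C hC => hsubC C ((hFmem C).1 (hSF hC))
    have hQopen : IsOpen Q := isOpen_biUnion fun C hC => hopenC C ((hFmem C).1 (hSF hC))
    have hcompQ : ∀ x ∈ Q, connectedComponentIn Q x = connectedComponentIn P x := by
      intro x hx
      refine Set.Subset.antisymm (connectedComponentIn_mono x hQP) ?_
      obtain ⟨C, hCS, hxC⟩ := Set.mem_iUnion₂.1 hx
      have hCP : connectedComponentIn P x = C := hcomp_of_mem C ((hFmem C).1 (hSF hCS)) x hxC
      refine isPreconnected_connectedComponentIn.subset_connectedComponentIn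
        (mem_connectedComponentIn (hQP hx)) ?_
      rw [hCP]; exact hQsubsets C hCS
    have hcompsQ : {C | ∃ x ∈ Q, C = connectedComponentIn Q x} = (S : Set _) := by
      ext C
      constructor
      · rintro ⟨x, hx, rfl⟩
        rw [hcompQ x hx]
        obtain ⟨C', hC'S, hxC'⟩ := Set.mem_iUnion₂.1 hx
        rw [hcomp_of_mem C' ((hFmem C').1 (hSF hC'S)) x hxC']
        exact hC'S
      · intro hCS
        have hC𝒞 : C ∈ 𝒞 := (hFmem C).1 (hSF hCS)
        obtain ⟨y, hy, rfl⟩ := hC𝒞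
        have hyC : y ∈ connectedComponentIn P y := mem_connectedComponentIn hy
        have hyQ : y ∈ Q := hQsubsets _ hCS hyC
        exact ⟨y, hyQ, (hcompQ y hyQ).symm⟩
    have := H Q hQopen (by rw [hcompsQ, Set.ncard_coe_finset, hScard])
      (fun x hx => by rw [hcompQ x hx]; exact hdiam x (hQP hx))
      (fun x hx y hy m hm => hdist x (hQP hx) y (hQP hy) m hm)
    rwa [hQ, hvol_union S hSF] at this
  -- choose a maximizing set S of n components
  obtain ⟨S, hSmem, hmax⟩ := Finset.exists_max_image (F.powersetCard n)
    (fun S => ∑ C ∈ S, volume C)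
    (Finset.powersetCard_nonempty.2 (by omega))
  rw [Finset.mem_powersetCard] at hSmem
  obtain ⟨hSF, hScard⟩ := hSmem
  have hSsum : ∑ C ∈ S, volume C ≤ Λ := hkey S hSF hScard
  -- minimal-volume element D of S
  obtain ⟨D, hDS, hDmin⟩ := Finset.exists_min_image S volume
    (Finset.card_pos.1 (by omega))
  -- every component outside S has volume ≤ volume D
  have houtside : ∀ C ∈ F \ S, volume C ≤ volume D := by
    intro C hC
    rw [Finset.mem_sdiff] at hC
    obtain ⟨hCF, hCS⟩ := hC
    set S' := insert C (S.erase D) with hS'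
    have hCe : C ∉ S.erase D := fun h => hCS (Finset.mem_of_mem_erase h)
    have hS'card : S'.card = n := by
      rw [hS', Finset.card_insert_of_notMem hCe, Finset.card_erase_of_mem hDS, hScard]
      omega
    have hS'F : S' ⊆ F := by
      intro x hx
      rcases Finset.mem_insert.1 hx with rfl | hx
      · exact hCF
      · exact hSF (Finset.mem_of_mem_erase hx)
    have hle : ∑ C' ∈ S', volume C' ≤ ∑ C' ∈ S, volume C' := by
      have := hmax S' (Finset.mem_powersetCard.2 ⟨hS'F, hS'card⟩)
      simpa using this
    rw [hS', Finset.sum_insert hCe] at hle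
    rw [← Finset.add_sum_erase S volume hDS] at hle
    have hfin' : ∑ C' ∈ S.erase D, volume C' ≠ ⊤ := by
      refine ne_top_of_le_ne_top hΛ (le_trans ?_ hSsum)
      exact Finset.sum_le_sum_of_subset (Finset.erase_subset D S)
    rwa [ENNReal.add_le_add_iff_right hfin'] at hle
  -- volume D ≤ Λ / n
  have hDle : volume D ≤ Λ / n := by
    rw [ENNReal.le_div_iff_mul_le (Or.inl hn0) (Or.inl hnT)]
    calc volume D * n = ∑ _C ∈ S, volume D := by
          rw [Finset.sum_const, hScard, nsmul_eq_mul, mul_comm]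
      _ ≤ ∑ C ∈ S, volume C := Finset.sum_le_sum fun C hC => hDmin C hC
      _ ≤ Λ := hSsum
  -- put it all together
  have hsplit : ∑ C ∈ F, volume C = ∑ C ∈ F \ S, volume C + ∑ C ∈ S, volume C :=
    (Finset.sum_sdiff hSF).symm
  have houtsum : ∑ C ∈ F \ S, volume C ≤ (k - n : ℕ) * (Λ / n) := by
    have hcard' : (F \ S).card = k - n := by
      rw [Finset.card_sdiff_of_subset hSF, hFcard, hScard]
    calc ∑ C ∈ F \ S, volume C ≤ (F \ S).card • (Λ / n) :=
          Finset.sum_le_card_nsmul _ _ _ fun C hC => le_trans (houtside C hC) hDle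
      _ = (k - n : ℕ) * (Λ / n) := by rw [hcard', nsmul_eq_mul]
  calc volume P = ∑ C ∈ F, volume C := by rw [hPunion, hvol_union F le_rfl]
    _ = ∑ C ∈ F \ S, volume C + ∑ C ∈ S, volume C := hsplit
    _ ≤ (k - n : ℕ) * (Λ / n) + Λ := add_le_add houtsum hSsum
    _ = (k - n : ℕ) * (Λ / n) + n * (Λ / n) := by rw [ENNReal.mul_div_cancel hn0 hnT]
    _ = (((k - n : ℕ) : ENNReal) + n) * (Λ / n) := by rw [add_mul]
    _ = (k : ENNReal) * (Λ / n) := by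
        rw [← Nat.cast_add, Nat.sub_add_cancel hk]
    _ = ((k : ENNReal) / n) * Λ := by
        rw [div_eq_mul_inv, div_eq_mul_inv, mul_assoc, mul_comm Λ _, ← mul_assoc, mul_assoc,
          mul_comm _ Λ]
end

section
/- Let p be an odd prime and set α_j := 2·sin(jπ/p) for j = 1, …, (p-1)/2. Then the real numbers α_1, …, α_{(p-1)/2} are linearly independent over ℚ (in particular each α_j is irrational). -/
open Complex Polynomial

theorem diagonals_of_regular_p_gon_rationally_independent
    (p : ℕ) (hp : p.Prime) (hodd : Odd p) :
    (∀ j : Fin ((p - 1) / 2), Irrational (2 * Real.sin (((j : ℕ) + 1) * Real.pi / p))) ∧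
    LinearIndependent ℚ (fun j : Fin ((p - 1) / 2) =>
      2 * Real.sin (((j : ℕ) + 1) * Real.pi / p)) := by
  obtain ⟨m, hm⟩ := hodd
  have hp2 := hp.two_le
  have hp3 : 3 ≤ p := by omega
  have hm1 : 1 ≤ m := by omega
  have hfm : (p - 1) / 2 = m := by omega
  set N : ℕ := 4 * p with hN
  have hN0 : N ≠ 0 := by omega
  set η : ℂ := Complex.exp (2 * ↑Real.pi * I / N) with hηdef
  have hη : IsPrimitiveRoot η N := Complex.isPrimitiveRoot_exp N hN0
  have hη0 : η ≠ 0 := Complex.exp_ne_zero _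
  have hp0 : (p : ℂ) ≠ 0 := Nat.cast_ne_zero.2 (by omega)
  have hexp : ∀ k : ℕ, η ^ k = Complex.exp (k * (2 * ↑Real.pi * I / N)) :=
    fun k => (Complex.exp_nat_mul _ k).symm
  -- η ^ p = I
  have hI : η ^ p = I := by
    rw [hexp]
    have harg : (p : ℂ) * (2 * ↑Real.pi * I / N) = (↑Real.pi / 2) * I := by
      rw [hN]; push_cast; field_simp; ring
    rw [harg, Complex.exp_mul_I]
    have hc : Complex.cos (↑Real.pi / 2) = 0 := by
      rw [show ((Real.pi : ℂ) / 2) = ((Real.pi / 2 : ℝ) : ℂ) by push_cast; ring,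
        ← Complex.ofReal_cos, Real.cos_pi_div_two, Complex.ofReal_zero]
    have hs : Complex.sin (↑Real.pi / 2) = 1 := by
      rw [show ((Real.pi : ℂ) / 2) = ((Real.pi / 2 : ℝ) : ℂ) by push_cast; ring,
        ← Complex.ofReal_sin, Real.sin_pi_div_two, Complex.ofReal_one]
    rw [hc, hs]; ring
  have hneg : η ^ (2 * p) = -1 := by
    rw [show 2 * p = p * 2 by ring, pow_mul, hI, Complex.I_sq]
  -- degree of minpoly of η
  have hdeg : (minpoly ℚ η).natDegree = 2 * p - 2 := by
    rw [← Polynomial.cyclotomic_eq_minpoly_rat hη (by omega), Polynomial.natDegree_cyclotomic]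
    have hcop2 : Nat.Coprime 2 p := (Nat.coprime_primes Nat.prime_two hp).mpr (by omega)
    have hcop : Nat.Coprime 4 p := by
      have := Nat.Coprime.pow_left 2 hcop2
      simpa using this
    rw [hN, Nat.totient_mul hcop, Nat.totient_prime hp]
    have h4 : Nat.totient 4 = 2 := by decide
    rw [h4]; omega
  -- linear independence of powers of η
  have hli : LinearIndependent ℚ fun i : Fin (2 * p - 2) => η ^ (i : ℕ) := by
    have h := linearIndependent_pow (K := ℚ) η
    rwa [hdeg] at h
  -- key computation
  have hE : ∀ j : ℕ, j < m →
      ((2 * Real.sin ((j + 1) * Real.pi / p) : ℝ) : ℂ) =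
        -(I * η) * (η ^ (2 * j + 1) + η ^ (2 * p - 3 - 2 * j)) := by
    intro j hj
    have hexp1 : Complex.exp (((((j : ℝ) + 1) * Real.pi / p : ℝ) : ℂ) * I) = η ^ (2 * j + 2) := by
      rw [hexp]
      congr 1
      rw [hN]; push_cast; field_simp; ring
    have hmulinv : η ^ (N - (2 * j + 2)) * η ^ (2 * j + 2) = 1 := by
      rw [← pow_add, show N - (2 * j + 2) + (2 * j + 2) = N by omega]
      exact hη.pow_eq_one
    have hexp2 : Complex.exp (-((((j : ℝ) + 1) * Real.pi / p : ℝ) : ℂ) * I) =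
        η ^ (N - (2 * j + 2)) := by
      have h1 : Complex.exp (-((((j : ℝ) + 1) * Real.pi / p : ℝ) : ℂ) * I) *
          Complex.exp (((((j : ℝ) + 1) * Real.pi / p : ℝ) : ℂ) * I) = 1 := by
        rw [← Complex.exp_add,
          show -((((j : ℝ) + 1) * Real.pi / p : ℝ) : ℂ) * I +
            ((((j : ℝ) + 1) * Real.pi / p : ℝ) : ℂ) * I = 0 by ring, Complex.exp_zero]
      rw [hexp1] at h1
      exact mul_right_cancel₀ (pow_ne_zero _ hη0) (h1.trans hmulinv.symm)
    have hsplit : η ^ (N - (2 * j + 2)) = -(η ^ (2 * p - 2 * j - 2)) := by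
      rw [show N - (2 * j + 2) = 2 * p + (2 * p - 2 * j - 2) by omega, pow_add, hneg]
      ring
    have hstep : η ^ (2 * p - 2 * j - 2) = η * η ^ (2 * p - 3 - 2 * j) := by
      rw [← pow_succ', show 2 * p - 3 - 2 * j + 1 = 2 * p - 2 * j - 2 by omega]
    have hstep2 : η ^ (2 * j + 2) = η * η ^ (2 * j + 1) := by
      rw [← pow_succ']
    rw [Complex.ofReal_mul, Complex.ofReal_ofNat, Complex.ofReal_sin, Complex.sin,
      hexp1, hexp2, hsplit, hstep, hstep2]
    ring
  rw [hfm]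
  constructor
  · -- irrationality
    intro j hirr
    obtain ⟨q, hq⟩ := hirr
    have hjm := j.2
    have hqC : (q : ℂ) = -(I * η) * (η ^ (2 * (j : ℕ) + 1) + η ^ (2 * p - 3 - 2 * (j : ℕ))) := by
      have h1 := congrArg (fun x : ℝ => (x : ℂ)) hq
      rw [show ((2 * Real.sin ((↑↑j + 1) * Real.pi / ↑p) : ℝ) : ℂ) =
        -(I * η) * (η ^ (2 * (j : ℕ) + 1) + η ^ (2 * p - 3 - 2 * (j : ℕ))) from
        hE (j : ℕ) hjm] at h1
      rw [← h1]; push_cast; ring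
    have hstepp : η ^ (p - 1) * η = I := by
      rw [← pow_succ, show p - 1 + 1 = p by omega, hI]
    have key : η ^ (2 * (j : ℕ) + 1) + η ^ (2 * p - 3 - 2 * (j : ℕ)) = (q : ℂ) * η ^ (p - 1) := by
      have hK : -(I * η) ≠ 0 := by
        simp [Complex.I_ne_zero, hη0]
      apply mul_left_cancel₀ hK
      rw [← hqC]
      linear_combination (q : ℂ) * I * hstepp + (q : ℂ) * Complex.I_mul_I
    -- three distinct powers linearly independent
    have hb1 : 2 * (j : ℕ) + 1 < 2 * p - 2 := by omega
    have hb2 : 2 * p - 3 - 2 * (j : ℕ) < 2 * p - 2 := by omega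
    have hb3 : p - 1 < 2 * p - 2 := by omega
    have hab : (⟨2 * (j : ℕ) + 1, hb1⟩ : Fin (2 * p - 2)) ≠ ⟨2 * p - 3 - 2 * (j : ℕ), hb2⟩ :=
      Fin.ne_of_val_ne (show 2 * (j : ℕ) + 1 ≠ 2 * p - 3 - 2 * (j : ℕ) by omega)
    have hac : (⟨2 * (j : ℕ) + 1, hb1⟩ : Fin (2 * p - 2)) ≠ ⟨p - 1, hb3⟩ :=
      Fin.ne_of_val_ne (show 2 * (j : ℕ) + 1 ≠ p - 1 by omega)
    have h0 := Fintype.linearIndependent_iff.mp hli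
      (fun k => (if k = (⟨2 * (j : ℕ) + 1, hb1⟩ : Fin (2 * p - 2)) then (1 : ℚ) else 0) +
        (if k = (⟨2 * p - 3 - 2 * (j : ℕ), hb2⟩ : Fin (2 * p - 2)) then 1 else 0) +
        (if k = (⟨p - 1, hb3⟩ : Fin (2 * p - 2)) then -q else 0)) ?_
      ⟨2 * (j : ℕ) + 1, hb1⟩
    · rw [if_pos rfl, if_neg hab, if_neg hac] at h0
      norm_num at h0
    · simp only [add_smul, ite_smul, zero_smul]
      rw [Finset.sum_add_distrib, Finset.sum_add_distrib,
        Finset.sum_ite_eq' Finset.univ (⟨2 * (j : ℕ) + 1, hb1⟩ : Fin (2 * p - 2)),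
        Finset.sum_ite_eq' Finset.univ (⟨2 * p - 3 - 2 * (j : ℕ), hb2⟩ : Fin (2 * p - 2)),
        Finset.sum_ite_eq' Finset.univ (⟨p - 1, hb3⟩ : Fin (2 * p - 2))]
      simp only [Finset.mem_univ, if_true, Rat.smul_def, one_smul]
      push_cast
      linear_combination key
  · -- linear independence
    rw [Fintype.linearIndependent_iff]
    intro g hg
    have h2 : ∑ j : Fin m, (g j : ℂ) *
        (-(I * η) * (η ^ (2 * (j : ℕ) + 1) + η ^ (2 * p - 3 - 2 * (j : ℕ)))) = 0 := by
      calc ∑ j : Fin m, (g j : ℂ) *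
          (-(I * η) * (η ^ (2 * (j : ℕ) + 1) + η ^ (2 * p - 3 - 2 * (j : ℕ))))
          = ∑ j : Fin m, ((g j • (2 * Real.sin ((↑(j : ℕ) + 1) * Real.pi / p)) : ℝ) : ℂ) := by
            refine Finset.sum_congr rfl fun j _ => ?_
            rw [Rat.smul_def, Complex.ofReal_mul, hE (j : ℕ) j.2]
            push_cast; ring
        _ = ((∑ j : Fin m, g j • (2 * Real.sin ((↑(j : ℕ) + 1) * Real.pi / p)) : ℝ) : ℂ) := by
            push_cast; ring
        _ = 0 := by rw [hg]; simp
    have h3 : ∑ j : Fin m, (g j : ℂ) *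
        (η ^ (2 * (j : ℕ) + 1) + η ^ (2 * p - 3 - 2 * (j : ℕ))) = 0 := by
      have hK : -(I * η) ≠ 0 := by simp [Complex.I_ne_zero, hη0]
      have h4 : -(I * η) * ∑ j : Fin m, (g j : ℂ) *
          (η ^ (2 * (j : ℕ) + 1) + η ^ (2 * p - 3 - 2 * (j : ℕ))) = 0 := by
        rw [Finset.mul_sum, ← h2]
        exact Finset.sum_congr rfl fun j _ => by ring
      exact (mul_eq_zero.mp h4).resolve_left hK
    have hbl : ∀ j : Fin m, 2 * (j : ℕ) + 1 < 2 * p - 2 := fun j => by have := j.2; omega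
    have hbr : ∀ j : Fin m, 2 * p - 3 - 2 * (j : ℕ) < 2 * p - 2 := fun j => by have := j.2; omega
    set e : Fin m ⊕ Fin m → Fin (2 * p - 2) :=
      Sum.elim (fun j => ⟨2 * (j : ℕ) + 1, hbl j⟩) (fun j => ⟨2 * p - 3 - 2 * (j : ℕ), hbr j⟩)
      with hedef
    have he : Function.Injective e := by
      rintro (a | a) (b | b) hab <;>
        simp only [hedef, Sum.elim_inl, Sum.elim_inr, Fin.mk.injEq] at hab
      · exact congrArg Sum.inl (Fin.ext (by omega))
      · exact absurd hab (by have := a.2; have := b.2; omega)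
      · exact absurd hab (by have := a.2; have := b.2; omega)
      · exact congrArg Sum.inr (Fin.ext (by have := a.2; have := b.2; omega))
    have hmain := Fintype.linearIndependent_iff.mp (hli.comp e he) (Sum.elim g g) ?_
    · intro j
      exact hmain (Sum.inl j)
    · rw [Fintype.sum_sum_type]
      simp only [Function.comp_apply, hedef, Sum.elim_inl, Sum.elim_inr, Rat.smul_def]
      rw [← Finset.sum_add_distrib, ← h3]
      exact Finset.sum_congr rfl fun j _ => by ring
end

section
/- For every ε ∈ (0, 1) and every integer n ≥ 1 there exists an open set P ⊆ ℝ^d with exactly n connected components, each an open ball of diameter less than 1, such that P contains no pair of points at positive integer distance, every line meets P in a set of total length at most 1, and λ_d(P) > (1-ε)·λ_d(B_d). Consequently f°_d(n) = l°_d(n) = λ_d(B_d) whenever n ≤ 2^d (d ≥ 2), where B_d is the d-dimensional ball of diameter 1. -/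
open Metric MeasureTheory

set_option maxHeartbeats 1000000

/-- `P` contains no pair of points at positive integer distance. -/
def AvoidsIntegralDistances {d : ℕ} (P : Set (EuclideanSpace ℝ (Fin d))) : Prop :=
  ∀ x ∈ P, ∀ y ∈ P, ∀ n : ℕ, 0 < n → dist x y ≠ n

/-- every line meets `P` in a set of total length at most `1`. -/
def LineCondition {d : ℕ} (P : Set (EuclideanSpace ℝ (Fin d))) : Prop :=
  ∀ p v : EuclideanSpace ℝ (Fin d), ‖v‖ = 1 → volume {t : ℝ | p + t • v ∈ P} ≤ 1

/-- `P` is a disjoint union of `n` open balls. -/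
def IsBallUnion {d : ℕ} (n : ℕ) (P : Set (EuclideanSpace ℝ (Fin d))) : Prop :=
  ∃ c : Fin n → EuclideanSpace ℝ (Fin d), ∃ r : Fin n → ℝ, (∀ i, 0 < r i) ∧
    (Pairwise fun i j => Disjoint (ball (c i) (r i)) (ball (c j) (r j))) ∧
    P = ⋃ i, ball (c i) (r i)

/-- `f°_d(n)`: supremum of volumes of disjoint unions of `n` open balls avoiding
integral distances. -/
noncomputable def fCirc (d n : ℕ) : ENNReal :=
  sSup {μ | ∃ P : Set (EuclideanSpace ℝ (Fin d)),
    IsBallUnion n P ∧ AvoidsIntegralDistances P ∧ μ = volume P}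

/-- `l°_d(n)`: supremum of volumes of disjoint unions of `n` open balls whose
intersection with every line has total length at most `1`. -/
noncomputable def lCirc (d n : ℕ) : ENNReal :=
  sSup {μ | ∃ P : Set (EuclideanSpace ℝ (Fin d)),
    IsBallUnion n P ∧ LineCondition P ∧ μ = volume P}

lemma aux_binom (d : ℕ) {t M : ℝ} (ht : 0 ≤ t) (htM : t ≤ M) :
    M ^ d + (2 ^ d - 1) * t ^ d ≤ (M + t) ^ d := by
  have h2 : (2:ℝ) ^ d * t ^ d = (t + t) ^ d := by rw [← mul_pow]; ring_nf
  have hbin : ∀ x : ℝ, (x + t) ^ d =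
      (∑ k ∈ Finset.range d, x ^ k * t ^ (d - k) * (d.choose k)) + x ^ d := by
    intro x
    rw [add_pow, Finset.sum_range_succ]
    simp
  have hle : (∑ k ∈ Finset.range d, t ^ k * t ^ (d - k) * (d.choose k)) ≤
      ∑ k ∈ Finset.range d, M ^ k * t ^ (d - k) * (d.choose k) := by
    apply Finset.sum_le_sum
    intro k _
    have h := pow_le_pow_left₀ ht htM k
    have h1 : (0:ℝ) ≤ t ^ (d - k) := pow_nonneg ht _
    have h2 : (0:ℝ) ≤ (d.choose k : ℝ) := Nat.cast_nonneg _
    exact mul_le_mul_of_nonneg_right (mul_le_mul_of_nonneg_right h h1) h2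
  have e1 := hbin t
  have e2 := hbin M
  nlinarith [hle]

lemma sum_pow_le (d n : ℕ) (hn : n ≤ 2 ^ d) (r : Fin n → ℝ)
    (hpos : ∀ i, 0 < r i) (h1 : ∀ i, r i ≤ 1/2)
    (h2 : ∀ i j, i ≠ j → r i + r j ≤ 1/2) :
    ∑ i, r i ^ d ≤ (1/2 : ℝ) ^ d := by
  rcases Nat.eq_zero_or_pos n with rfl | hn0
  · simp
  have hne : (Finset.univ : Finset (Fin n)).Nonempty := Finset.univ_nonempty_iff.2
    (Fin.pos_iff_nonempty.mp hn0)
  obtain ⟨i0, -, hmax⟩ := Finset.exists_max_image Finset.univ r hne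
  set M := r i0 with hM
  have hmax' : ∀ j, r j ≤ M := fun j => hmax j (Finset.mem_univ j)
  by_cases hM4 : M ≤ 1/4
  · calc ∑ i, r i ^ d ≤ ∑ _i : Fin n, (1/4 : ℝ) ^ d := by
          apply Finset.sum_le_sum
          intro i _
          exact pow_le_pow_left₀ (hpos i).le ((hmax' i).trans hM4) d
    _ = n * (1/4 : ℝ) ^ d := by simp [Finset.card_univ, mul_comm]
    _ ≤ (2:ℝ) ^ d * (1/4 : ℝ) ^ d := by
          apply mul_le_mul_of_nonneg_right _ (by positivity)
          calc (n:ℝ) ≤ ((2^d : ℕ) : ℝ) := by exact_mod_cast hn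
          _ = (2:ℝ)^d := by push_cast; ring
    _ = (1/2 : ℝ) ^ d := by rw [← mul_pow]; norm_num
  · push_neg at hM4
    set t := 1/2 - M with htdef
    have ht0 : 0 ≤ t := by have := h1 i0; simp only [htdef]; linarith
    have htM : t ≤ M := by simp only [htdef]; linarith
    have hjt : ∀ j, j ≠ i0 → r j ≤ t := by
      intro j hj
      have := h2 j i0 hj
      simp only [htdef]; linarith
    have hsplit : ∑ i, r i ^ d = M ^ d + ∑ j ∈ Finset.univ.erase i0, r j ^ d := by
      rw [← Finset.add_sum_erase _ _ (Finset.mem_univ i0)]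
    have hrest : ∑ j ∈ Finset.univ.erase i0, r j ^ d ≤ (n - 1 : ℕ) * t ^ d := by
      calc ∑ j ∈ Finset.univ.erase i0, r j ^ d ≤ ∑ _j ∈ Finset.univ.erase i0, t ^ d :=
            Finset.sum_le_sum fun j hj =>
              pow_le_pow_left₀ (hpos j).le (hjt j (Finset.mem_erase.1 hj).1) d
      _ = (n - 1 : ℕ) * t ^ d := by
            rw [Finset.sum_const, Finset.card_erase_of_mem (Finset.mem_univ i0),
              Finset.card_univ, Fintype.card_fin, nsmul_eq_mul]
    have hcast : ((n - 1 : ℕ) : ℝ) ≤ (2:ℝ)^d - 1 := by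
      have h1' : (1:ℕ) ≤ 2^d := Nat.one_le_two_pow
      have : (n - 1 : ℕ) ≤ 2^d - 1 := by omega
      calc ((n-1:ℕ):ℝ) ≤ ((2^d - 1 : ℕ):ℝ) := by exact_mod_cast this
      _ = (2:ℝ)^d - 1 := by push_cast [h1']; ring
    have htd : (0:ℝ) ≤ t ^ d := pow_nonneg ht0 _
    have := aux_binom d ht0 htM
    have hMt : M + t = 1/2 := by simp [htdef]
    rw [hsplit]
    calc M ^ d + ∑ j ∈ Finset.univ.erase i0, r j ^ d
        ≤ M ^ d + ((2:ℝ)^d - 1) * t ^ d := by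
          have := mul_le_mul_of_nonneg_right hcast htd
          linarith [hrest]
    _ ≤ (M + t) ^ d := aux_binom d ht0 htM
    _ = (1/2:ℝ) ^ d := by rw [hMt]

lemma dist_ge_of_disjoint {X : Type*} [NormedAddCommGroup X] [NormedSpace ℝ X] {x y : X} {a b : ℝ}
    (ha : 0 < a) (hb : 0 < b) (h : Disjoint (ball x a) (ball y b)) : a + b ≤ dist x y := by
  by_contra hc
  push_neg at hc
  set θ := a / (a + b) with hθ
  have hab : 0 < a + b := by linarith
  have hθ0 : 0 < θ := by positivity
  have hθ1 : θ < 1 := by rw [hθ, div_lt_one hab]; linarith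
  set z := x + θ • (y - x) with hz
  have hzx : dist z x = θ * dist x y := by
    rw [dist_eq_norm, hz]
    simp only [add_sub_cancel_left]
    rw [norm_smul, Real.norm_eq_abs, abs_of_pos hθ0, dist_eq_norm, norm_sub_rev]
  have hzy : dist z y = (1 - θ) * dist x y := by
    have : z - y = (1 - θ) • (x - y) := by rw [hz]; module
    rw [dist_eq_norm, this, norm_smul, Real.norm_eq_abs, abs_of_pos (by linarith), dist_eq_norm]
  have hz1 : z ∈ ball x a := by
    rw [mem_ball, hzx]
    calc θ * dist x y < θ * (a + b) := by
          apply mul_lt_mul_of_pos_left hc hθ0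
    _ = a := by rw [hθ]; field_simp
  have hz2 : z ∈ ball y b := by
    rw [mem_ball, hzy]
    calc (1-θ) * dist x y < (1-θ) * (a + b) := by
          apply mul_lt_mul_of_pos_left hc (by linarith)
    _ = b := by rw [hθ]; field_simp; ring
  exact (h.le_bot ⟨hz1, hz2⟩)

lemma nontrivial_eucl (hd : 1 ≤ d) : Nontrivial (EuclideanSpace ℝ (Fin d)) := by
  refine ⟨⟨EuclideanSpace.single ⟨0, hd⟩ (1:ℝ), 0, fun h => ?_⟩⟩
  have : ‖EuclideanSpace.single (⟨0, hd⟩ : Fin d) (1:ℝ)‖ = 1 := by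
    rw [EuclideanSpace.norm_single]; norm_num
  rw [h, norm_zero] at this
  norm_num at this

lemma vol_ball_eq (hd : 1 ≤ d) (x : EuclideanSpace ℝ (Fin d)) {ρ : ℝ} (hρ : 0 ≤ ρ) :
    volume (ball x ρ) = ENNReal.ofReal (ρ ^ d) *
      volume (ball (0 : EuclideanSpace ℝ (Fin d)) 1) := by
  haveI := nontrivial_eucl hd
  rw [Measure.addHaar_ball volume x hρ, finrank_euclideanSpace_fin]

lemma radius_le_half {d : ℕ} (hd : 1 ≤ d) {P : Set (EuclideanSpace ℝ (Fin d))}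
    (hP : AvoidsIntegralDistances P) {c : EuclideanSpace ℝ (Fin d)} {ρ : ℝ}
    (hsub : ball c ρ ⊆ P) : 2 * ρ ≤ 1 := by
  by_contra hc
  push_neg at hc
  set u : EuclideanSpace ℝ (Fin d) := EuclideanSpace.single ⟨0, hd⟩ (1:ℝ) with hu
  have hun : ‖u‖ = 1 := by rw [hu, EuclideanSpace.norm_single]; norm_num
  set x := c + (1/2 : ℝ) • u with hx
  set y := c - (1/2 : ℝ) • u with hy
  have hxm : x ∈ ball c ρ := by
    rw [mem_ball, hx, dist_eq_norm, add_sub_cancel_left, norm_smul, Real.norm_eq_abs, hun]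
    rw [abs_of_pos (by norm_num : (0:ℝ) < 1/2)]
    linarith
  have hym : y ∈ ball c ρ := by
    rw [mem_ball, hy, dist_eq_norm, sub_sub_cancel_left, norm_neg, norm_smul,
      Real.norm_eq_abs, hun]
    rw [abs_of_pos (by norm_num : (0:ℝ) < 1/2)]
    linarith
  have hdxy : dist x y = 1 := by
    have hxy : x - y = u := by rw [hx, hy]; module
    rw [dist_eq_norm, hxy, hun]
  have := hP x (hsub hxm) y (hsub hym) 1 one_pos
  rw [hdxy] at this
  exact this (by norm_num)

lemma pair_sum_le_half {d : ℕ} {P : Set (EuclideanSpace ℝ (Fin d))}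
    (hP : AvoidsIntegralDistances P) {c₁ c₂ : EuclideanSpace ℝ (Fin d)} {r₁ r₂ : ℝ}
    (h1 : 0 < r₁) (h2 : 0 < r₂) (hdisj : Disjoint (ball c₁ r₁) (ball c₂ r₂))
    (hs1 : ball c₁ r₁ ⊆ P) (hs2 : ball c₂ r₂ ⊆ P) : r₁ + r₂ ≤ 1/2 := by
  by_contra hc
  push_neg at hc
  set Rr := r₁ + r₂ with hRr
  have hRr0 : 0 < Rr := by linarith
  set D := dist c₁ c₂ with hD
  have hDge : Rr ≤ D := dist_ge_of_disjoint h1 h2 hdisj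
  have hD0 : 0 < D := lt_of_lt_of_le hRr0 hDge
  set a := D - Rr with ha
  have ha0 : 0 ≤ a := by simp [ha]; linarith
  set k : ℕ := ⌊a⌋₊ + 1 with hk
  have hk1 : a < k := by
    rw [hk]; push_cast; exact Nat.lt_floor_add_one a
  have hk2 : (k:ℝ) ≤ a + 1 := by
    rw [hk]; push_cast
    have := Nat.floor_le ha0
    linarith
  have hkub : (k:ℝ) < D + Rr := by
    have : a + 1 < a + 2 * Rr := by linarith
    simp only [ha] at *
    linarith
  have hklb : D - Rr < k := hk1
  set u : EuclideanSpace ℝ (Fin d) := D⁻¹ • (c₂ - c₁) with hu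
  have hcu : c₂ - c₁ = D • u := by
    rw [hu, smul_smul, mul_inv_cancel₀ hD0.ne', one_smul]
  have hun : ‖u‖ = 1 := by
    rw [hu, norm_smul, Real.norm_eq_abs, abs_of_pos (by positivity)]
    rw [← dist_eq_norm']
    field_simp
    exact hD.symm
  set δ := D - k with hδ
  have hδabs : |δ| < Rr := by
    rw [abs_lt]; constructor <;> [linarith; linarith]
  set A := δ * r₁ / Rr with hA
  set B := δ * r₂ / Rr with hB
  have hABδ : A + B = δ := by rw [hA, hB]; field_simp; ring
  set x := c₁ + A • u with hx
  set y := c₂ - B • u with hy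
  have hxm : x ∈ ball c₁ r₁ := by
    rw [mem_ball, hx, dist_eq_norm, add_sub_cancel_left, norm_smul, Real.norm_eq_abs, hun,
      mul_one, hA, abs_div, abs_mul, abs_of_pos hRr0, abs_of_pos h1]
    rw [div_lt_iff₀ hRr0]
    calc |δ| * r₁ < Rr * r₁ := by exact mul_lt_mul_of_pos_right hδabs h1
    _ = r₁ * Rr := by ring
  have hym : y ∈ ball c₂ r₂ := by
    rw [mem_ball, hy, dist_eq_norm, sub_sub_cancel_left, norm_neg, norm_smul,
      Real.norm_eq_abs, hun, mul_one, hB, abs_div, abs_mul, abs_of_pos hRr0, abs_of_pos h2]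
    rw [div_lt_iff₀ hRr0]
    calc |δ| * r₂ < Rr * r₂ := by exact mul_lt_mul_of_pos_right hδabs h2
    _ = r₂ * Rr := by ring
  have hxy : dist x y = k := by
    have hyx : y - x = (D - (A + B)) • u := by
      have hc2 : c₂ = c₁ + D • u := by
        rw [← hcu]; abel
      rw [hy, hx, hc2]
      module
    rw [dist_eq_norm, ← norm_neg, neg_sub, hyx, hABδ, norm_smul, Real.norm_eq_abs, hun, mul_one,
      hδ]
    rw [show D - (D - (k:ℝ)) = (k:ℝ) by ring]
    exact abs_of_nonneg (Nat.cast_nonneg k)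
  exact hP x (hs1 hxm) y (hs2 hym) k (Nat.succ_pos _) hxy

lemma line_radius_le_half {d : ℕ} (hd : 1 ≤ d) {P : Set (EuclideanSpace ℝ (Fin d))}
    (hP : LineCondition P) {c : EuclideanSpace ℝ (Fin d)} {ρ : ℝ} (hρ : 0 < ρ)
    (hsub : ball c ρ ⊆ P) : 2 * ρ ≤ 1 := by
  set u : EuclideanSpace ℝ (Fin d) := EuclideanSpace.single ⟨0, hd⟩ (1:ℝ) with hu
  have hun : ‖u‖ = 1 := by rw [hu, EuclideanSpace.norm_single]; norm_num
  have hsub2 : Set.Ioo (-ρ) ρ ⊆ {t : ℝ | c + t • u ∈ P} := by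
    intro t ht
    apply hsub
    rw [mem_ball, dist_eq_norm, add_sub_cancel_left, norm_smul, Real.norm_eq_abs, hun, mul_one]
    exact abs_lt.2 ⟨ht.1, ht.2⟩
  have := hP c u hun
  have hv : ENNReal.ofReal (2 * ρ) ≤ 1 := by
    calc ENNReal.ofReal (2 * ρ) = volume (Set.Ioo (-ρ) ρ) := by
          rw [Real.volume_Ioo]; ring_nf
    _ ≤ volume {t : ℝ | c + t • u ∈ P} := measure_mono hsub2
    _ ≤ 1 := this
  exact ENNReal.ofReal_le_one.mp hv

lemma line_pair_sum_le_half {d : ℕ} {P : Set (EuclideanSpace ℝ (Fin d))}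
    (hP : LineCondition P) {c₁ c₂ : EuclideanSpace ℝ (Fin d)} {r₁ r₂ : ℝ}
    (h1 : 0 < r₁) (h2 : 0 < r₂) (hdisj : Disjoint (ball c₁ r₁) (ball c₂ r₂))
    (hs1 : ball c₁ r₁ ⊆ P) (hs2 : ball c₂ r₂ ⊆ P) : r₁ + r₂ ≤ 1/2 := by
  set D := dist c₁ c₂ with hD
  have hDge : r₁ + r₂ ≤ D := dist_ge_of_disjoint h1 h2 hdisj
  have hD0 : 0 < D := by linarith
  set u : EuclideanSpace ℝ (Fin d) := D⁻¹ • (c₂ - c₁) with hu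
  have hcu : c₂ - c₁ = D • u := by
    rw [hu, smul_smul, mul_inv_cancel₀ hD0.ne', one_smul]
  have hun : ‖u‖ = 1 := by
    rw [hu, norm_smul, Real.norm_eq_abs, abs_of_pos (by positivity), ← dist_eq_norm']
    field_simp
    exact hD.symm
  have hsubA : Set.Ioo (-r₁) r₁ ⊆ {t : ℝ | c₁ + t • u ∈ P} := by
    intro t ht
    apply hs1
    rw [mem_ball, dist_eq_norm, add_sub_cancel_left, norm_smul, Real.norm_eq_abs, hun, mul_one]
    exact abs_lt.2 ⟨ht.1, ht.2⟩
  have hsubB : Set.Ioo (D - r₂) (D + r₂) ⊆ {t : ℝ | c₁ + t • u ∈ P} := by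
    intro t ht
    apply hs2
    have : c₁ + t • u - c₂ = (t - D) • u := by
      have hc2 : c₂ = c₁ + D • u := by rw [← hcu]; abel
      rw [hc2]; module
    rw [mem_ball, dist_eq_norm, this, norm_smul, Real.norm_eq_abs, hun, mul_one]
    rw [abs_lt]
    exact ⟨by linarith [ht.1], by linarith [ht.2]⟩
  have hdisjI : Disjoint (Set.Ioo (-r₁) r₁) (Set.Ioo (D - r₂) (D + r₂)) := by
    apply Set.disjoint_left.2
    intro t ht1 ht2
    have := ht1.2
    have := ht2.1
    linarith [ht1.2, ht2.1]
  have hv : ENNReal.ofReal (2 * r₁) + ENNReal.ofReal (2 * r₂) ≤ 1 := by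
    calc ENNReal.ofReal (2 * r₁) + ENNReal.ofReal (2 * r₂)
        = volume (Set.Ioo (-r₁) r₁ ∪ Set.Ioo (D - r₂) (D + r₂)) := by
          rw [measure_union hdisjI measurableSet_Ioo, Real.volume_Ioo, Real.volume_Ioo]
          congr 1 <;> ring_nf
    _ ≤ volume {t : ℝ | c₁ + t • u ∈ P} := measure_mono (Set.union_subset hsubA hsubB)
    _ ≤ 1 := hP c₁ u hun
  rw [← ENNReal.ofReal_add (by linarith) (by linarith)] at hv
  have := ENNReal.ofReal_le_one.mp hv
  linarith

lemma vol_le_of_constraints {d : ℕ} (hd : 1 ≤ d) {n : ℕ} (hn : n ≤ 2^d)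
    (c : Fin n → EuclideanSpace ℝ (Fin d)) (r : Fin n → ℝ)
    (hpos : ∀ i, 0 < r i) (h1 : ∀ i, r i ≤ 1/2) (h2 : ∀ i j, i ≠ j → r i + r j ≤ 1/2) :
    volume (⋃ i, ball (c i) (r i)) ≤ volume (ball (0 : EuclideanSpace ℝ (Fin d)) (1/2)) := by
  calc volume (⋃ i, ball (c i) (r i)) ≤ ∑' i, volume (ball (c i) (r i)) := measure_iUnion_le _
  _ = ∑ i, volume (ball (c i) (r i)) := tsum_fintype _
  _ = ∑ i, ENNReal.ofReal (r i ^ d) * volume (ball (0 : EuclideanSpace ℝ (Fin d)) 1) := by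
        exact Finset.sum_congr rfl fun i _ => vol_ball_eq hd (c i) (hpos i).le
  _ = (∑ i, ENNReal.ofReal (r i ^ d)) * volume (ball (0 : EuclideanSpace ℝ (Fin d)) 1) := by
        rw [Finset.sum_mul]
  _ = ENNReal.ofReal (∑ i, r i ^ d) * volume (ball (0 : EuclideanSpace ℝ (Fin d)) 1) := by
        rw [ENNReal.ofReal_sum_of_nonneg fun i _ => pow_nonneg (hpos i).le d]
  _ ≤ ENNReal.ofReal ((1/2:ℝ) ^ d) * volume (ball (0 : EuclideanSpace ℝ (Fin d)) 1) := by
        exact mul_le_mul_left (ENNReal.ofReal_le_ofReal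
          (sum_pow_le d n hn r hpos h1 h2)) _
  _ = volume (ball (0 : EuclideanSpace ℝ (Fin d)) (1/2)) := by
        rw [vol_ball_eq hd 0 (by norm_num : (0:ℝ) ≤ 1/2)]

lemma le_of_forall_ofReal_lt {b V : ENNReal} (hV : V ≠ ⊤)
    (h : ∀ ε : ℝ, 0 < ε → ε < 1 → ENNReal.ofReal (1 - ε) * V ≤ b) : V ≤ b := by
  have htend : Filter.Tendsto (fun k : ℕ => ENNReal.ofReal (1 - 1/(k+2)) * V)
      Filter.atTop (nhds (1 * V)) := by
    apply ENNReal.Tendsto.mul_const _ (Or.inr hV)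
    have h0 : Filter.Tendsto (fun k : ℕ => (1:ℝ)/(k+2)) Filter.atTop (nhds 0) := by
      apply Filter.Tendsto.div_atTop tendsto_const_nhds
      apply Filter.tendsto_atTop_add_const_right
      exact tendsto_natCast_atTop_atTop
    have h1 : Filter.Tendsto (fun k : ℕ => 1 - (1:ℝ)/(k+2)) Filter.atTop (nhds 1) := by
      have := tendsto_const_nhds.sub h0 (α := ℕ) (f := fun _ => (1:ℝ))
      simpa using this
    have := ENNReal.tendsto_ofReal h1
    simpa [ENNReal.ofReal_one] using this
  rw [one_mul] at htend
  apply le_of_tendsto htend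
  filter_upwards with k
  apply h
  · positivity
  · have : (0:ℝ) < (k:ℝ) + 2 := by positivity
    rw [div_lt_one this]
    linarith

lemma construction (d : ℕ) (hd : 2 ≤ d) (ε : ℝ) (hε : ε ∈ Set.Ioo (0:ℝ) 1) (n : ℕ)
    (hn : 1 ≤ n) :
    ∃ P : Set (EuclideanSpace ℝ (Fin d)),
      (∃ c : Fin n → EuclideanSpace ℝ (Fin d), ∃ r : Fin n → ℝ,
        (∀ i, 0 < r i ∧ 2 * r i < 1) ∧
        (Pairwise fun i j => Disjoint (ball (c i) (r i)) (ball (c j) (r j))) ∧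
        P = ⋃ i, ball (c i) (r i)) ∧
      AvoidsIntegralDistances P ∧ LineCondition P ∧
      ENNReal.ofReal (1 - ε) * volume (ball (0 : EuclideanSpace ℝ (Fin d)) (1/2)) <
        volume P := by
  obtain ⟨hε0, hε1⟩ := hε
  obtain ⟨m, rfl⟩ : ∃ m, n = m + 1 := ⟨n - 1, by omega⟩
  have hd1 : 1 ≤ d := by omega
  have hdR : (2:ℝ) ≤ (d:ℝ) := by exact_mod_cast hd
  set δ : ℝ := ε / (2 * d) with hδdef
  have hδ0 : 0 < δ := by positivity
  have hδ4 : δ < 1/4 := by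
    rw [hδdef, div_lt_iff₀ (by positivity)]
    nlinarith
  set R : ℝ := (1 - δ)/2 with hRdef
  have hR0 : 0 < R := by rw [hRdef]; linarith
  have hR : R < 1/2 := by rw [hRdef]; linarith
  set g : ℝ := 1/2 - R with hgdef
  have hg : 0 < g := by rw [hgdef]; linarith
  have hg8 : g < 1/8 := by rw [hgdef, hRdef]; linarith
  set N : ℝ := ((m:ℝ) + 1) with hNdef
  have hN : 1 ≤ N := by
    rw [hNdef]
    have : (0:ℝ) ≤ (m:ℝ) := Nat.cast_nonneg m
    linarith
  have hN0 : 0 < N := by linarith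
  set ρ : ℝ := g / (4*N) with hρdef
  have hρ0 : 0 < ρ := by positivity
  have hρg : ρ ≤ g/4 := by
    rw [hρdef]
    apply div_le_div_of_nonneg_left hg.le (by norm_num)
    linarith
  set u : EuclideanSpace ℝ (Fin d) := EuclideanSpace.single ⟨0, hd1⟩ (1:ℝ) with hu
  have hun : ‖u‖ = 1 := by rw [hu, EuclideanSpace.norm_single]; norm_num
  set t : Fin (m+1) → ℝ := fun i => if i = 0 then 0 else R + (i:ℕ) * g / N with ht
  set c : Fin (m+1) → EuclideanSpace ℝ (Fin d) := fun i => t i • u with hc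
  set r : Fin (m+1) → ℝ := fun i => if i = 0 then R else ρ with hr
  -- basic facts
  have hival : ∀ i : Fin (m+1), i ≠ 0 → 1 ≤ ((i:ℕ):ℝ) ∧ ((i:ℕ):ℝ) ≤ N - 1 := by
    intro i hi
    have h1 : 1 ≤ (i:ℕ) := by
      rcases Nat.eq_zero_or_pos (i:ℕ) with h | h
      · exact absurd (Fin.ext h) hi
      · exact h
    have h2 : (i:ℕ) ≤ m := by omega
    constructor
    · exact_mod_cast h1
    · rw [hNdef]
      have : ((i:ℕ):ℝ) ≤ (m:ℝ) := by exact_mod_cast h2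
      linarith
  have htlb : ∀ i : Fin (m+1), i ≠ 0 → R + g/N ≤ t i := by
    intro i hi
    obtain ⟨h1, -⟩ := hival i hi
    simp only [ht, if_neg hi]
    have : g/N ≤ ((i:ℕ):ℝ) * g / N := by
      rw [div_le_div_iff₀ hN0 hN0]
      nlinarith [mul_nonneg (mul_nonneg (sub_nonneg.2 h1) hg.le) hN0.le]
    linarith
  have htub : ∀ i : Fin (m+1), i ≠ 0 → t i ≤ R + (N-1) * g / N := by
    intro i hi
    obtain ⟨-, h2⟩ := hival i hi
    simp only [ht, if_neg hi]
    have : ((i:ℕ):ℝ) * g / N ≤ (N-1) * g / N := by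
      rw [div_le_div_iff₀ hN0 hN0]
      nlinarith [mul_nonneg (mul_nonneg (sub_nonneg.2 h2) hg.le) hN0.le]
    linarith
  have ht0 : t 0 = 0 := by simp [ht]
  have hdistc : ∀ i j : Fin (m+1), dist (c i) (c j) = |t i - t j| := by
    intro i j
    rw [hc, dist_eq_norm, ← sub_smul, norm_smul, Real.norm_eq_abs, hun, mul_one]
  -- radii spec
  have hrspec : ∀ i : Fin (m+1), 0 < r i ∧ 2 * r i < 1 := by
    intro i
    by_cases hi : i = 0
    · simp only [hr, if_pos hi]
      constructor
      · exact hR0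
      · linarith
    · simp only [hr, if_neg hi]
      exact ⟨hρ0, by linarith⟩
  -- pairwise disjoint
  have hpair : Pairwise fun i j => Disjoint (ball (c i) (r i)) (ball (c j) (r j)) := by
    intro i j hij
    apply ball_disjoint_ball
    rw [hdistc]
    by_cases hi : i = 0
    · subst hi
      have hj : j ≠ 0 := hij.symm
      rw [ht0, zero_sub, abs_neg]
      simp only [hr, if_pos rfl, if_neg hj]
      have h1 := htlb j hj
      have habs : |t j| = t j := abs_of_pos (by
        have : 0 < g/N := div_pos hg hN0
        linarith)
      rw [habs]
      have hρN : ρ ≤ g/N := by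
        rw [hρdef, div_le_div_iff₀ (by positivity) hN0]
        nlinarith [mul_nonneg hg.le hN0.le]
      linarith
    · by_cases hj : j = 0
      · subst hj
        rw [ht0, sub_zero]
        simp only [hr, if_neg hi, if_pos rfl]
        have h1 := htlb i hi
        have habs : |t i| = t i := abs_of_pos (by
          have : 0 < g/N := div_pos hg hN0
          linarith)
        rw [habs]
        have hρN : ρ ≤ g/N := by
          rw [hρdef, div_le_div_iff₀ (by positivity) hN0]
          nlinarith [mul_nonneg hg.le hN0.le]
        linarith
      · -- both nonzero
        simp only [hr, if_neg hi, if_neg hj]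
        have hvij : (i:ℕ) ≠ (j:ℕ) := fun h => hij (Fin.ext h)
        have hone : (1:ℝ) ≤ |((i:ℕ):ℝ) - ((j:ℕ):ℝ)| := by
          rcases Nat.lt_or_ge (i:ℕ) (j:ℕ) with h | h
          · have h' : (i:ℕ) + 1 ≤ (j:ℕ) := h
            have h2 : ((i:ℕ):ℝ) + 1 ≤ ((j:ℕ):ℝ) := by exact_mod_cast h'
            rw [abs_sub_comm, abs_of_nonneg (by linarith)]
            linarith
          · have h' : (j:ℕ) + 1 ≤ (i:ℕ) := by omega
            have h2 : ((j:ℕ):ℝ) + 1 ≤ ((i:ℕ):ℝ) := by exact_mod_cast h'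
            rw [abs_of_nonneg (by linarith)]
            linarith
        have hteq : t i - t j = (((i:ℕ):ℝ) - ((j:ℕ):ℝ)) * g / N := by
          simp only [ht, if_neg hi, if_neg hj]
          ring
        rw [hteq, abs_div, abs_mul, abs_of_pos hg, abs_of_pos hN0]
        have hgN : g/N ≤ |((i:ℕ):ℝ) - ((j:ℕ):ℝ)| * g / N := by
          gcongr
          nlinarith
        have hρ2 : 2 * ρ ≤ g / N := by
          have e : ρ = g / N / 4 := by rw [hρdef, div_div, mul_comm N 4]
          have h0 : 0 ≤ g / N := (div_pos hg hN0).le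
          rw [e]
          linarith
        linarith
  -- contained in ball 0 (1/2)
  have hsubP : ∀ i : Fin (m+1), ball (c i) (r i) ⊆ ball (0 : EuclideanSpace ℝ (Fin d)) (1/2) := by
    intro i
    apply ball_subset_ball'
    have hdist0 : dist (c i) 0 = |t i| := by
      rw [hc, dist_eq_norm, sub_zero, norm_smul, Real.norm_eq_abs, hun, mul_one]
    rw [hdist0]
    by_cases hi : i = 0
    · subst hi
      rw [ht0, abs_zero]
      simp only [hr, if_pos rfl]
      linarith
    · simp only [hr, if_neg hi]
      have h1 := htlb i hi
      have h2 := htub i hi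
      have habs : |t i| = t i := abs_of_pos (by
        have : 0 < g/N := div_pos hg hN0
        linarith)
      rw [habs]
      have key : ρ + (R + (N-1) * g / N) ≤ 1/2 := by
        have : ρ + (N-1) * g / N ≤ g := by
          rw [hρdef, div_add_div _ _ (by positivity) hN0.ne', div_le_iff₀ (by positivity)]
          nlinarith
        rw [hgdef] at this
        linarith
      linarith
  set P := ⋃ i, ball (c i) (r i) with hP
  have hPsub : P ⊆ ball (0 : EuclideanSpace ℝ (Fin d)) (1/2) := Set.iUnion_subset hsubP
  have hAvoid : AvoidsIntegralDistances P := by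
    intro x hx y hy k hk
    have hx' := hPsub hx
    have hy' := hPsub hy
    rw [mem_ball] at hx' hy'
    have hdxy : dist x y < 1 := by
      calc dist x y ≤ dist x 0 + dist 0 y := dist_triangle _ _ _
      _ = dist x 0 + dist y 0 := by rw [dist_comm (0 : EuclideanSpace ℝ (Fin d)) y]
      _ < 1 := by linarith
    have hk1 : (1:ℝ) ≤ k := by exact_mod_cast hk
    exact ne_of_lt (lt_of_lt_of_le hdxy hk1)
  have hLine : LineCondition P := by
    intro p v hv
    calc volume {s : ℝ | p + s • v ∈ P} ≤ EMetric.diam {s : ℝ | p + s • v ∈ P} :=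
          Real.volume_le_diam _
    _ ≤ 1 := by
        apply EMetric.diam_le
        intro s hs w hw
        have h1 := hPsub hs
        have h2 := hPsub hw
        rw [mem_ball] at h1 h2
        have hdd : dist s w < 1 := by
          have heq : dist s w = dist (p + s • v) (p + w • v) := by
            rw [Real.dist_eq, dist_eq_norm]
            have hsw : p + s • v - (p + w • v) = (s - w) • v := by module
            rw [hsw, norm_smul, hv, mul_one, Real.norm_eq_abs]
          rw [heq]
          calc dist (p + s • v) (p + w • v)
              ≤ dist (p + s • v) 0 + dist 0 (p + w • v) := dist_triangle _ _ _
          _ = dist (p + s • v) 0 + dist (p + w • v) 0 := by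
              rw [dist_comm (0 : EuclideanSpace ℝ (Fin d))]
          _ < 1 := by linarith
        rw [edist_dist]
        calc ENNReal.ofReal (dist s w) ≤ ENNReal.ofReal 1 := ENNReal.ofReal_le_ofReal hdd.le
        _ = 1 := ENNReal.ofReal_one
  have hball0 : ball (c 0) (r 0) = ball (0 : EuclideanSpace ℝ (Fin d)) R := by
    have hc0 : c 0 = 0 := by rw [hc]; simp only [ht0, zero_smul]
    have hr0 : r 0 = R := by simp [hr]
    rw [hc0, hr0]
  have hPvol : ENNReal.ofReal (R^d) * volume (ball (0:EuclideanSpace ℝ (Fin d)) 1)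
      ≤ volume P := by
    rw [← vol_ball_eq hd1 0 hR0.le]
    apply measure_mono
    rw [← hball0, hP]
    exact Set.subset_iUnion (fun i => ball (c i) (r i)) 0
  set V1 := volume (ball (0:EuclideanSpace ℝ (Fin d)) 1) with hV1
  have hV1ne : V1 ≠ 0 := (measure_ball_pos volume 0 one_pos).ne'
  have hV1top : V1 ≠ ⊤ := measure_ball_lt_top.ne
  have hreal : (1 - ε) * (1/2:ℝ)^d < R^d := by
    have hb : (1:ℝ) + d * (-δ) ≤ (1 + (-δ))^d := one_add_mul_le_pow (by linarith) d
    have hdne : (d:ℝ) ≠ 0 := by positivity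
    have hdδ : (d:ℝ) * δ = ε/2 := by
      rw [hδdef]
      field_simp
    have h2 : 1 - ε < (1-δ)^d := by
      have e1 : (1:ℝ) + d * (-δ) = 1 - ε/2 := by rw [mul_neg, hdδ]; ring
      have e2 : (1:ℝ) + -δ = 1 - δ := by ring
      rw [e1, e2] at hb
      linarith
    have hRd : R^d = (1-δ)^d * (1/2:ℝ)^d := by
      rw [hRdef, ← mul_pow]
      congr 1
      ring
    rw [hRd]
    exact mul_lt_mul_of_pos_right h2 (by positivity)
  refine ⟨P, ⟨c, r, hrspec, hpair, hP⟩, hAvoid, hLine, ?_⟩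
  calc ENNReal.ofReal (1-ε) * volume (ball (0:EuclideanSpace ℝ (Fin d)) (1/2))
      = ENNReal.ofReal (1-ε) * (ENNReal.ofReal ((1/2:ℝ)^d) * V1) := by
        rw [vol_ball_eq hd1 0 (by norm_num : (0:ℝ) ≤ 1/2)]
  _ = ENNReal.ofReal ((1-ε) * (1/2:ℝ)^d) * V1 := by
        rw [ENNReal.ofReal_mul (by linarith), mul_assoc]
  _ < ENNReal.ofReal (R^d) * V1 := by
        apply ENNReal.mul_lt_mul_left hV1ne hV1top
        exact (ENNReal.ofReal_lt_ofReal_iff (by positivity)).mpr hreal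
  _ ≤ volume P := hPvol

theorem ball_union_construction_and_small_n
    (d : ℕ) (hd : 2 ≤ d) :
    (∀ ε ∈ Set.Ioo (0 : ℝ) 1, ∀ n : ℕ, 1 ≤ n →
      ∃ P : Set (EuclideanSpace ℝ (Fin d)),
        (∃ c : Fin n → EuclideanSpace ℝ (Fin d), ∃ r : Fin n → ℝ,
          (∀ i, 0 < r i ∧ 2 * r i < 1) ∧
          (Pairwise fun i j => Disjoint (ball (c i) (r i)) (ball (c j) (r j))) ∧
          P = ⋃ i, ball (c i) (r i)) ∧
        AvoidsIntegralDistances P ∧ LineCondition P ∧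
        ENNReal.ofReal (1 - ε) * volume (ball (0 : EuclideanSpace ℝ (Fin d)) (1/2)) <
          volume P) ∧
    (∀ n : ℕ, 1 ≤ n → n ≤ 2 ^ d →
      fCirc d n = volume (ball (0 : EuclideanSpace ℝ (Fin d)) (1/2)) ∧
      lCirc d n = volume (ball (0 : EuclideanSpace ℝ (Fin d)) (1/2))) := by
  constructor
  · intro ε hε n hn
    exact construction d hd ε hε n hn
  · intro n hn1 hn2
    have hd1 : 1 ≤ d := by omega
    set V := volume (ball (0 : EuclideanSpace ℝ (Fin d)) (1/2)) with hV
    have hVtop : V ≠ ⊤ := measure_ball_lt_top.ne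
    have hlow : ∀ S : Set ENNReal,
        (∀ P : Set (EuclideanSpace ℝ (Fin d)), IsBallUnion n P →
          AvoidsIntegralDistances P → LineCondition P → volume P ∈ S) → V ≤ sSup S := by
      intro S hS
      apply le_of_forall_ofReal_lt hVtop
      intro ε hε0 hε1
      obtain ⟨P, ⟨c, r, hr, hpair, hPeq⟩, hA, hL, hvol⟩ :=
        construction d hd ε ⟨hε0, hε1⟩ n hn1
      have hmem : volume P ∈ S := hS P ⟨c, r, fun i => (hr i).1, hpair, hPeq⟩ hA hL
      exact le_trans hvol.le (le_sSup hmem)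
    have hsubu : ∀ (c : Fin n → EuclideanSpace ℝ (Fin d)) (r : Fin n → ℝ) (i : Fin n),
        ball (c i) (r i) ⊆ ⋃ j, ball (c j) (r j) := fun c r i =>
      Set.subset_iUnion (fun j => ball (c j) (r j)) i
    have hupA : ∀ P : Set (EuclideanSpace ℝ (Fin d)), IsBallUnion n P →
        AvoidsIntegralDistances P → volume P ≤ V := by
      rintro P ⟨c, r, hpos, hpair, rfl⟩ hA
      have h1 : ∀ i, r i ≤ 1/2 := by
        intro i
        have := radius_le_half hd1 hA (hsubu c r i)
        linarith
      have h2 : ∀ i j, i ≠ j → r i + r j ≤ 1/2 := fun i j hij =>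
        pair_sum_le_half hA (hpos i) (hpos j) (hpair hij) (hsubu c r i) (hsubu c r j)
      exact vol_le_of_constraints hd1 hn2 c r hpos h1 h2
    have hupL : ∀ P : Set (EuclideanSpace ℝ (Fin d)), IsBallUnion n P →
        LineCondition P → volume P ≤ V := by
      rintro P ⟨c, r, hpos, hpair, rfl⟩ hL
      have h1 : ∀ i, r i ≤ 1/2 := by
        intro i
        have := line_radius_le_half hd1 hL (hpos i) (hsubu c r i)
        linarith
      have h2 : ∀ i j, i ≠ j → r i + r j ≤ 1/2 := fun i j hij =>
        line_pair_sum_le_half hL (hpos i) (hpos j) (hpair hij) (hsubu c r i) (hsubu c r j)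
      exact vol_le_of_constraints hd1 hn2 c r hpos h1 h2
    constructor
    · apply le_antisymm
      · apply sSup_le
        rintro μ ⟨P, hB, hA, rfl⟩
        exact hupA P hB hA
      · exact hlow _ (fun P hB hA _hL => ⟨P, hB, hA, rfl⟩)
    · apply le_antisymm
      · apply sSup_le
        rintro μ ⟨P, hB, hL, rfl⟩
        exact hupL P hB hL
      · exact hlow _ (fun P hB _hA hL => ⟨P, hB, hL, rfl⟩)
end

section
/- For every integer d ≥ 1 and every integer k ≥ 5, consider S₁, the open ball in ℝ^d of diameter 1 - 2/k centered at the origin truncated by the two hyperplanes x₁ = ±(1/4 - 1/k), and S₂ its translate by (dk + 1/2 - 2/k, 0, …, 0). Then for all a ∈ S₁ and b ∈ S₂ one has dk < dist(a,b) < dk + 1; hence S₁ ∪ S₂ contains no pair of points at positive integer distance. -/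
open Metric MeasureTheory

lemma abs_coord_le_norm' {d : ℕ} (x : EuclideanSpace ℝ (Fin d)) (i : Fin d) :
    |x i| ≤ ‖x‖ := by
  rw [EuclideanSpace.norm_eq, ← Real.sqrt_sq_eq_abs]
  apply Real.sqrt_le_sqrt
  have := Finset.single_le_sum (f := fun j => ‖x j‖ ^ 2)
    (fun j _ => sq_nonneg _) (Finset.mem_univ i)
  simpa [Real.norm_eq_abs, sq_abs] using this


lemma arith_upper' (D K : ℝ) (hK : 5 ≤ K) (hD : K ≤ D) :
    (1/2 - 2/K + (D + 1/2 - 2/K))^2 + (1 - 2/K)^2 < (D+1)^2 := by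
  have hK0 : (0:ℝ) < K := by linarith
  have key : (1/2 - 2/K + (D + 1/2 - 2/K))^2 + (1 - 2/K)^2 - (D+1)^2
      = ((K-2)^2 + 16 - 8*(D+1)*K) / K^2 := by
    field_simp
    ring
  have hDK : K*K ≤ D*K := mul_le_mul_of_nonneg_right hD (le_of_lt hK0)
  have hnum : (K-2)^2 + 16 - 8*(D+1)*K < 0 := by nlinarith
  have hdiv : ((K-2)^2 + 16 - 8*(D+1)*K) / K^2 < 0 :=
    div_neg_of_neg_of_pos hnum (by positivity)
  linarith [key ▸ hdiv]

theorem truncated_balls_avoid_integral_distances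
    (d k : ℕ) (hd : 0 < d) (hk : 5 ≤ k)
    (S₁ S₂ : Set (EuclideanSpace ℝ (Fin d)))
    (hS₁ : S₁ = ball (0 : EuclideanSpace ℝ (Fin d)) ((1 - 2 / (k : ℝ)) / 2) ∩
      {x : EuclideanSpace ℝ (Fin d) | |x ⟨0, hd⟩| < 1 / 4 - 1 / (k : ℝ)})
    (hS₂ : S₂ = (fun x : EuclideanSpace ℝ (Fin d) =>
      x + ((d : ℝ) * k + 1 / 2 - 2 / (k : ℝ)) •
        EuclideanSpace.single (⟨0, hd⟩ : Fin d) (1 : ℝ)) '' S₁) :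
    (∀ a ∈ S₁, ∀ b ∈ S₂,
      (d : ℝ) * k < dist a b ∧ dist a b < (d : ℝ) * k + 1) ∧
    (∀ x ∈ S₁ ∪ S₂, ∀ y ∈ S₁ ∪ S₂, ∀ n : ℕ, 0 < n → dist x y ≠ n) := by
  have hk5 : (5:ℝ) ≤ (k:ℝ) := by exact_mod_cast hk
  have hkpos : (0:ℝ) < (k:ℝ) := by linarith
  have hd1 : (1:ℝ) ≤ (d:ℝ) := by exact_mod_cast hd
  have hdk : (k:ℝ) ≤ (d:ℝ) * k := by nlinarith
  have e2k : (2:ℝ)/(k:ℝ) = 2*(1/(k:ℝ)) := by ring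
  have e4k : (4:ℝ)/(k:ℝ) = 4*(1/(k:ℝ)) := by ring
  have hu0 : (0:ℝ) < 1/(k:ℝ) := by positivity
  have hu5 : 1/(k:ℝ) ≤ 1/5 := by
    rw [div_le_div_iff₀ hkpos (by norm_num)]
    linarith
  set i0 : Fin d := ⟨0, hd⟩ with hi0
  set c : ℝ := (d:ℝ) * k + 1 / 2 - 2 / (k:ℝ) with hc
  set e : EuclideanSpace ℝ (Fin d) := EuclideanSpace.single i0 (1:ℝ) with he
  -- basic membership facts
  have hmem : ∀ x ∈ S₁, ‖x‖ < (1 - 2/(k:ℝ))/2 ∧ |x i0| < 1/4 - 1/(k:ℝ) := by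
    intro x hx
    rw [hS₁] at hx
    obtain ⟨hx1, hx2⟩ := hx
    rw [mem_ball, dist_zero_right] at hx1
    exact ⟨hx1, hx2⟩
  have key : ∀ a ∈ S₁, ∀ b ∈ S₂,
      (d : ℝ) * k < dist a b ∧ dist a b < (d : ℝ) * k + 1 := by
    intro a ha b hb
    rw [hS₂] at hb
    obtain ⟨b', hb', rfl⟩ := hb
    obtain ⟨hna, ha2⟩ := hmem a ha
    obtain ⟨hnb, hb2⟩ := hmem b' hb'
    simp only []
    set b : EuclideanSpace ℝ (Fin d) := b' + c • e with hbdef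
    have hb0 : b i0 = b' i0 + c := by
      simp [hbdef, he, EuclideanSpace.single_apply]
    have hbi : ∀ i, i ≠ i0 → b i = b' i := by
      intro i hi
      simp [hbdef, he, EuclideanSpace.single_apply, hi]
    -- lower bound
    have hcoord : |a i0 - b i0| ≤ dist a b := by
      have h := abs_coord_le_norm' (a - b) i0
      rw [dist_eq_norm]
      simpa using h
    have habs1 : |a i0 - b' i0| ≤ |a i0| + |b' i0| := abs_sub _ _
    have hlow1 : c - (a i0 - b' i0) ≤ |a i0 - b' i0 - c| := by
      have := neg_abs_le (a i0 - b' i0 - c)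
      cases abs_cases (a i0 - b' i0 - c) with
      | inl h => linarith [le_abs_self (a i0 - b' i0 - c), neg_abs_le (a i0 - b' i0 - c)]
      | inr h => linarith [le_abs_self (a i0 - b' i0 - c), neg_abs_le (a i0 - b' i0 - c)]
    have hlower : (d:ℝ) * k < dist a b := by
      have : a i0 - b i0 = a i0 - b' i0 - c := by rw [hb0]; ring
      rw [this] at hcoord
      have h2 : a i0 - b' i0 ≤ |a i0| + |b' i0| := le_trans (le_abs_self _) habs1
      have : c - (|a i0| + |b' i0|) ≤ dist a b := by linarith
      rw [hc] at this
      linarith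
    refine ⟨hlower, ?_⟩
    -- upper bound
    have e1 : dist a b ^ 2 = ∑ i, (a i - b i)^2 := by
      rw [dist_eq_norm, EuclideanSpace.norm_eq, Real.sq_sqrt (by positivity)]
      apply Finset.sum_congr rfl
      intro i _
      simp [sq_abs]
    have e2 : ‖a - b'‖ ^ 2 = ∑ i, (a i - b' i)^2 := by
      rw [EuclideanSpace.norm_eq, Real.sq_sqrt (by positivity)]
      apply Finset.sum_congr rfl
      intro i _
      simp [sq_abs]
    have hsplit : ∑ i, (a i - b i)^2 =
        (a i0 - b i0)^2 + ∑ i ∈ Finset.univ.erase i0, (a i - b i)^2 :=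
      (Finset.add_sum_erase _ _ (Finset.mem_univ i0)).symm
    have htail : ∑ i ∈ Finset.univ.erase i0, (a i - b i)^2 ≤ ∑ i, (a i - b' i)^2 := by
      have heq : ∑ i ∈ Finset.univ.erase i0, (a i - b i)^2 =
          ∑ i ∈ Finset.univ.erase i0, (a i - b' i)^2 := by
        apply Finset.sum_congr rfl
        intro i hi
        rw [hbi i (Finset.ne_of_mem_erase hi)]
      rw [heq]
      exact Finset.sum_le_sum_of_subset_of_nonneg (Finset.erase_subset _ _)
        (fun i _ _ => sq_nonneg _)
    have hsq : dist a b ^ 2 ≤ (a i0 - b i0)^2 + ‖a - b'‖^2 := by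
      rw [e1, hsplit, e2]; linarith
    have hA : |a i0 - b i0| < 1/2 - 2/(k:ℝ) + c := by
      rw [hb0]
      calc |a i0 - (b' i0 + c)| ≤ |a i0| + |b' i0 + c| := abs_sub _ _
        _ ≤ |a i0| + (|b' i0| + |c|) := by linarith [abs_add_le (b' i0) c, abs_nonneg (a i0)]
        _ = |a i0| + |b' i0| + c := by
            rw [abs_of_nonneg (by rw [hc]; linarith : (0:ℝ) ≤ c)]; ring
        _ < 1/2 - 2/(k:ℝ) + c := by linarith
    have hB : ‖a - b'‖ < 1 - 2/(k:ℝ) :=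
      lt_of_le_of_lt (norm_sub_le _ _) (by linarith)
    have hA2 : (a i0 - b i0)^2 < (1/2 - 2/(k:ℝ) + c)^2 := by
      rw [← sq_abs]
      apply pow_lt_pow_left₀ hA (abs_nonneg _)
      norm_num
    have hB2 : ‖a - b'‖^2 < (1 - 2/(k:ℝ))^2 := by
      apply pow_lt_pow_left₀ hB (norm_nonneg _)
      norm_num
    have hfin : dist a b ^ 2 < ((d:ℝ) * k + 1)^2 := by
      rw [hc] at hA2
      have := arith_upper' ((d:ℝ)*k) (k:ℝ) hk5 hdk
      linarith
    exact lt_of_pow_lt_pow_left₀ 2 (by linarith) hfin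
  refine ⟨key, ?_⟩
  -- no integral distances
  have hsmall : ∀ x ∈ S₁, ∀ y ∈ S₁, dist x y < 1 := by
    intro x hx y hy
    obtain ⟨hnx, -⟩ := hmem x hx
    obtain ⟨hny, -⟩ := hmem y hy
    calc dist x y = ‖x - y‖ := dist_eq_norm x y
      _ ≤ ‖x‖ + ‖y‖ := norm_sub_le _ _
      _ < 1 := by
          have : 0 < 2/(k:ℝ) := by positivity
          linarith
  intro x hx y hy n hn hdist
  have hn1 : (1:ℝ) ≤ (n:ℝ) := by exact_mod_cast hn
  have hDnat : ((d * k : ℕ) : ℝ) = (d:ℝ) * k := by push_cast; ring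
  cases hx with
  | inl hx1 =>
    cases hy with
    | inl hy1 =>
      have := hsmall x hx1 y hy1
      rw [hdist] at this
      linarith
    | inr hy2 =>
      obtain ⟨h1, h2⟩ := key x hx1 y hy2
      rw [hdist] at h1 h2
      have hlt : d * k < n := by exact_mod_cast (hDnat ▸ h1)
      have hlt2 : (n:ℝ) < ((d*k+1 : ℕ) : ℝ) := by push_cast; linarith
      have : n < d * k + 1 := by exact_mod_cast hlt2
      omega
  | inr hx2 =>
    cases hy with
    | inl hy1 =>
      obtain ⟨h1, h2⟩ := key y hy1 x hx2
      rw [dist_comm, hdist] at h1 h2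
      have hlt : d * k < n := by exact_mod_cast (hDnat ▸ h1)
      have hlt2 : (n:ℝ) < ((d*k+1 : ℕ) : ℝ) := by push_cast; linarith
      have : n < d * k + 1 := by exact_mod_cast hlt2
      omega
    | inr hy2 =>
      rw [hS₂] at hx2 hy2
      obtain ⟨x', hx', rfl⟩ := hx2
      obtain ⟨y', hy', rfl⟩ := hy2
      have := hsmall x' hx' y' hy'
      simp only [dist_add_right] at hdist
      rw [hdist] at this
      linarith
end
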